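/- arXiv:1302.2437 — 7 statements merged into one kernel-verified Lean document; each statement's English description precedes it below -/
import Mathlib

section
/- Let K be a field, l > 1 an integer, and let d, n be integers with 1 ≤ d ≤ l−1, 2 ≤ n ≤ l and d + n ≥ l + 1. Let q₁, …, qₙ be pairwise distinct elements of K satisfying q_j^l = 1 for every j. Then S_{d,n}(q₁, …, qₙ) = 0. -/
/-- The complete homogeneous symmetric polynomial `S_{d,n}(x₁,…,xₙ)`:
the sum over all weakly increasing `d`-tuples of indices, equivalently the sum over all
exponent vectors `(k₁,…,kₙ)` with `k₁ + ⋯ + kₙ = d` of `x₁^{k₁}⋯xₙ^{kₙ}` (with `S_{0,n} = 1`). -/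
noncomputable def completeHomogeneous {K : Type*} [CommRing K] (d n : ℕ) (x : Fin n → K) : K :=
  ∑ f ∈ Finset.Nat.antidiagonalTuple n d, ∏ i, x i ^ f i

section Lemmas
variable {K : Type*} [CommRing K]

lemma CH_zero (n : ℕ) (x : Fin n → K) : completeHomogeneous 0 n x = 1 := by
  rw [completeHomogeneous, Finset.Nat.antidiagonalTuple_zero_right]
  simp

lemma CH_one_var (d : ℕ) (x : Fin 1 → K) : completeHomogeneous d 1 x = x 0 ^ d := by
  rw [completeHomogeneous, Finset.Nat.antidiagonalTuple_one]
  simp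

lemma CH_comp_perm (d n : ℕ) (x : Fin n → K) (σ : Equiv.Perm (Fin n)) :
    completeHomogeneous d n (x ∘ σ) = completeHomogeneous d n x := by
  unfold completeHomogeneous
  refine Finset.sum_nbij' (fun f => f ∘ σ.symm) (fun f => f ∘ σ) ?_ ?_ ?_ ?_ ?_
  · intro f hf
    rw [Finset.Nat.mem_antidiagonalTuple] at hf ⊢
    rw [← hf]
    exact Equiv.sum_comp σ.symm f
  · intro f hf
    rw [Finset.Nat.mem_antidiagonalTuple] at hf ⊢
    rw [← hf]
    exact Equiv.sum_comp σ f
  · intro f _; funext i; simp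
  · intro f _; funext i; simp
  · intro f _
    exact Fintype.prod_equiv σ _ _ (fun i => by simp)

lemma CH_succ (d n : ℕ) (x : Fin (n+1) → K) :
    completeHomogeneous (d+1) (n+1) x =
      completeHomogeneous (d+1) n (fun i => x i.succ) +
        x 0 * completeHomogeneous d (n+1) x := by
  classical
  unfold completeHomogeneous
  rw [← Finset.sum_filter_add_sum_filter_not (Finset.Nat.antidiagonalTuple (n+1) (d+1))
    (fun f => f 0 = 0)]
  congr 1
  · refine Finset.sum_nbij' (fun f => Fin.tail f) (fun g => Fin.cons 0 g) ?_ ?_ ?_ ?_ ?_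
    · intro f hf
      simp only [Finset.mem_filter, Finset.Nat.mem_antidiagonalTuple] at hf ⊢
      obtain ⟨hs, h0⟩ := hf
      rw [Fin.sum_univ_succ, h0, zero_add] at hs
      exact hs
    · intro g hg
      simp only [Finset.mem_filter, Finset.Nat.mem_antidiagonalTuple] at hg ⊢
      constructor
      · rw [Fin.sum_univ_succ]; simpa using hg
      · simp
    · intro f hf
      simp only [Finset.mem_filter] at hf
      rw [← hf.2]
      exact Fin.cons_self_tail f
    · intro g _
      funext i
      simp [Fin.tail]
    · intro f hf
      simp only [Finset.mem_filter] at hf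
      rw [Fin.prod_univ_succ, hf.2, pow_zero, one_mul]
      rfl
  · rw [Finset.mul_sum]
    refine Finset.sum_nbij' (fun f => Function.update f 0 (f 0 - 1))
      (fun g => Function.update g 0 (g 0 + 1)) ?_ ?_ ?_ ?_ ?_
    · intro f hf
      simp only [Finset.mem_filter, Finset.Nat.mem_antidiagonalTuple] at hf ⊢
      obtain ⟨hs, h0⟩ := hf
      rw [Fin.sum_univ_succ] at hs ⊢
      rw [Function.update_self]
      have : ∀ i : Fin n, Function.update f 0 (f 0 - 1) i.succ = f i.succ := by
        intro i; exact Function.update_of_ne (Fin.succ_ne_zero i) _ f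
      rw [Finset.sum_congr rfl (fun i _ => this i)]
      omega
    · intro g hg
      simp only [Finset.mem_filter, Finset.Nat.mem_antidiagonalTuple] at hg ⊢
      rw [Fin.sum_univ_succ] at hg ⊢
      rw [Function.update_self]
      have : ∀ i : Fin n, Function.update g 0 (g 0 + 1) i.succ = g i.succ := by
        intro i; exact Function.update_of_ne (Fin.succ_ne_zero i) _ g
      rw [Finset.sum_congr rfl (fun i _ => this i)]
      constructor
      · omega
      · simp
    · intro f hf
      simp only [Finset.mem_filter] at hf
      funext j
      rcases eq_or_ne j 0 with rfl | hj
      · rw [Function.update_self, Function.update_self]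
        omega
      · rw [Function.update_of_ne hj, Function.update_of_ne hj]
    · intro g _
      funext j
      rcases eq_or_ne j 0 with rfl | hj
      · rw [Function.update_self, Function.update_self]
        omega
      · rw [Function.update_of_ne hj, Function.update_of_ne hj]
    · intro f hf
      simp only [Finset.mem_filter] at hf
      rw [Fin.prod_univ_succ, Fin.prod_univ_succ, Function.update_self]
      have h1 : ∀ i : Fin n, Function.update f 0 (f 0 - 1) i.succ = f i.succ := by
        intro i; exact Function.update_of_ne (Fin.succ_ne_zero i) _ f
      simp only [h1]
      rw [← mul_assoc]
      congr 1
      rw [← pow_succ']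
      congr 1
      omega

lemma CH_two (d : ℕ) (x : Fin 2 → K) :
    (x 0 - x 1) * completeHomogeneous d 2 x = x 0 ^ (d+1) - x 1 ^ (d+1) := by
  induction d with
  | zero => simp [CH_zero]
  | succ d ih =>
    rw [CH_succ d 1 x, CH_one_var]
    have h1 : (0 : Fin 1).succ = (1 : Fin 2) := rfl
    rw [h1]
    linear_combination x 0 * ih

lemma CH_sub (d n : ℕ) (x : Fin (n+2) → K) :
    completeHomogeneous (d+1) (n+1) (fun i => x i.succ)
      - completeHomogeneous (d+1) (n+1) (Fin.cons (x 0) (fun i => x i.succ.succ))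
    = (x 1 - x 0) * completeHomogeneous d (n+2) x := by
  have h1 := CH_succ d (n+1) x
  have h2 := CH_succ d (n+1) (x ∘ (Equiv.swap 0 1))
  rw [CH_comp_perm, CH_comp_perm] at h2
  have hz : (fun i : Fin (n+1) => (x ∘ (Equiv.swap (0 : Fin (n+2)) 1)) i.succ)
      = Fin.cons (x 0) (fun i => x i.succ.succ) := by
    funext i
    refine Fin.cases ?_ (fun j => ?_) i
    · simp [Fin.succ_zero_eq_one, Equiv.swap_apply_right]
    · have hne0 : (j.succ.succ : Fin (n+2)) ≠ 0 := Fin.succ_ne_zero _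
      have hne1 : (j.succ.succ : Fin (n+2)) ≠ 1 := by
        intro h
        have := Fin.succ_injective _ (h.trans (Fin.succ_zero_eq_one).symm)
        exact Fin.succ_ne_zero _ this
      simp [Equiv.swap_apply_of_ne_of_ne hne0 hne1]
  rw [hz] at h2
  have hx0 : (x ∘ (Equiv.swap (0 : Fin (n+2)) 1)) 0 = x 1 := by
    simp [Equiv.swap_apply_left]
  rw [hx0] at h2
  linear_combination h2 - h1

end Lemmas

lemma key_vanish {K : Type*} [Field K] (l : ℕ) (hl : 1 < l) :
    ∀ n, 2 ≤ n → n ≤ l → ∀ d, 1 ≤ d → d ≤ l - 1 → l + 1 ≤ d + n →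
    ∀ x : Fin n → K, Function.Injective x → (∀ j, x j ^ l = 1) →
    completeHomogeneous d n x = 0 := by
  intro n
  induction n using Nat.strong_induction_on with
  | _ n IH =>
    intro hn2 hnl d hd1 hdl hdn x hinj hroot
    obtain ⟨m, rfl⟩ : ∃ m, n = m + 2 := ⟨n - 2, by omega⟩
    rcases Nat.eq_zero_or_pos m with rfl | hm
    · -- n = 2 : forces d = l - 1
      have hd : d + 1 = l := by omega
      have h2 := CH_two d x
      have hxx : x 0 - x 1 ≠ 0 :=
        sub_ne_zero.mpr (fun h => (by decide : (0 : Fin 2) ≠ 1) (hinj h))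
      rw [hd, hroot 0, hroot 1, sub_self] at h2
      exact (mul_eq_zero.mp h2).resolve_left hxx
    · -- n = m + 2 ≥ 3
      have hx01 : x 1 - x 0 ≠ 0 := by
        refine sub_ne_zero.mpr (fun h => ?_)
        have h01 := hinj h
        have : ((1 : Fin (m + 2)) : ℕ) = ((0 : Fin (m + 2)) : ℕ) := congrArg Fin.val h01
        simp [Fin.val_one] at this
      have sub : ∀ d', 1 ≤ d' → d' + 1 ≤ l - 1 → l + 1 ≤ d' + (m + 2) →
          completeHomogeneous d' (m + 2) x = 0 := by
        intro d' h1 h2 h3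
        have hkey := CH_sub d' m x
        have hy : completeHomogeneous (d' + 1) (m + 1) (fun i => x i.succ) = 0 := by
          apply IH (m + 1) (by omega) (by omega) (by omega) (d' + 1) (by omega) h2 (by omega)
          · exact fun a b hab => Fin.succ_injective _ (hinj hab)
          · exact fun j => hroot j.succ
        have hzinj : Function.Injective
            (Fin.cons (x 0) (fun i => x i.succ.succ) : Fin (m + 1) → K) := by
          intro a b hab
          rcases Fin.eq_zero_or_eq_succ a with rfl | ⟨i, rfl⟩ <;>
            rcases Fin.eq_zero_or_eq_succ b with rfl | ⟨j, rfl⟩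
          · rfl
          · rw [Fin.cons_zero, Fin.cons_succ] at hab
            exact absurd (hinj hab).symm (Fin.succ_ne_zero _)
          · rw [Fin.cons_succ, Fin.cons_zero] at hab
            exact absurd (hinj hab) (Fin.succ_ne_zero _)
          · rw [Fin.cons_succ, Fin.cons_succ] at hab
            rw [Fin.succ_injective _ (Fin.succ_injective _ (hinj hab))]
        have hzroot : ∀ j : Fin (m + 1),
            (Fin.cons (x 0) (fun i => x i.succ.succ) : Fin (m + 1) → K) j ^ l = 1 := by
          intro j
          rcases Fin.eq_zero_or_eq_succ j with rfl | ⟨i, rfl⟩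
          · rw [Fin.cons_zero]; exact hroot 0
          · rw [Fin.cons_succ]; exact hroot _
        have hz : completeHomogeneous (d' + 1) (m + 1)
            (Fin.cons (x 0) (fun i => x i.succ.succ)) = 0 :=
          IH (m + 1) (by omega) (by omega) (by omega) (d' + 1) (by omega) h2 (by omega)
            _ hzinj hzroot
        have h0 : (x 1 - x 0) * completeHomogeneous d' (m + 2) x = 0 := by
          rw [← hkey, hy, hz, sub_zero]
        exact (mul_eq_zero.mp h0).resolve_left hx01
      by_cases hcase : d + 1 ≤ l - 1
      · exact sub d hd1 hcase hdn
      · have hd : d = l - 1 := by omega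
        have hl3 : 3 ≤ l := by omega
        obtain ⟨e, rfl⟩ : ∃ e, d = e + 1 := ⟨d - 1, by omega⟩
        have hrec : completeHomogeneous (e + 1) (m + 2) x
            = completeHomogeneous (e + 1) (m + 1) (fun i => x i.succ)
              + x 0 * completeHomogeneous e (m + 2) x := CH_succ e (m + 1) x
        have htail : completeHomogeneous (e + 1) (m + 1) (fun i => x i.succ) = 0 := by
          apply IH (m + 1) (by omega) (by omega) (by omega) (e + 1) (by omega) (by omega)
            (by omega)
          · exact fun a b hab => Fin.succ_injective _ (hinj hab)
          · exact fun j => hroot j.succ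
        have he : completeHomogeneous e (m + 2) x = 0 := sub e (by omega) (by omega) (by omega)
        rw [hrec, htail, he, mul_zero, add_zero]

theorem stmt0 (K : Type*) [Field K] (l d n : ℕ) (hl : 1 < l)
    (hd1 : 1 ≤ d) (hdl : d ≤ l - 1) (hn2 : 2 ≤ n) (hnl : n ≤ l)
    (hdn : l + 1 ≤ d + n)
    (x : Fin n → K) (hdist : Function.Injective x)
    (hroot : ∀ j, x j ^ l = 1) :
    completeHomogeneous d n x = 0 :=
  key_vanish l hl n hn2 hnl d hd1 hdl hdn x hdist hroot
end

section
/- Let s be an integer with 1 ≤ s ≤ l−1 and let c ∈ ℤ satisfy c ≡ 2s (mod l). Then κ_{−s} · [K;c;s] = 0 in A. (This is the key vanishing identity of the paper: in its notation, κ_{la+lb−s}·[K; 2s−la−lb; s] = κ_{−s}·[K; 2s−la−lb; s] = 0 for every s ≥ 1 not divisible by l.) -/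
open Polynomial

/-- The group algebra `A = F[K]/(K^{2l} − 1)` of the cyclic group of order `2l` over `F`,
realized as a quotient of the polynomial ring. -/
abbrev QA (F : Type*) [Field F] (l : ℕ) : Type _ :=
  Polynomial F ⧸ Ideal.span {(X : Polynomial F) ^ (2 * l) - 1}

/-- The image `K` of the canonical generator in `A = F[K]/(K^{2l} − 1)`. -/
noncomputable def KK (F : Type*) [Field F] (l : ℕ) : QA F l :=
  Ideal.Quotient.mk (Ideal.span {(X : Polynomial F) ^ (2 * l) - 1}) X

/-- The inverse `K⁻¹ = K^{2l−1}` of `K` in `A` (since `K^{2l} = 1`). -/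
noncomputable def KKinv (F : Type*) [Field F] (l : ℕ) : QA F l :=
  KK F l ^ (2 * l - 1)

/-- `κ_n = (2l)⁻¹ Σ_{i=0}^{2l−1} q^{−2ni} K^i ∈ A`. -/
noncomputable def kappa (F : Type*) [Field F] (l : ℕ) (q : F) (n : ℤ) : QA F l :=
  (((2 * l : ℕ) : F))⁻¹ • ∑ i ∈ Finset.range (2 * l), q ^ (-2 * n * (i : ℤ)) • KK F l ^ i

/-- `[K;c;m] = ∏_{h=1}^{m} (K q^{c−h+1} − K⁻¹ q^{−(c−h+1)}) / (q^h − q^{−h}) ∈ A`. -/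
noncomputable def Kbinom (F : Type*) [Field F] (l : ℕ) (q : F) (c : ℤ) (m : ℕ) : QA F l :=
  ∏ h ∈ Finset.Icc 1 m,
    (q ^ (h : ℤ) - q ^ (-(h : ℤ)))⁻¹ •
      (q ^ (c - h + 1) • KK F l - q ^ (-(c - h + 1)) • KKinv F l)

theorem stmt3 (l : ℕ) (hl : 1 < l) (hodd : Odd l)
    (F : Type*) [Field F] (hchar : ((2 * l : ℕ) : F) ≠ 0)
    (q : F) (hq : IsPrimitiveRoot q l)
    (s : ℕ) (hs1 : 1 ≤ s) (hsl : s ≤ l - 1)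
    (c : ℤ) (hc : (l : ℤ) ∣ c - 2 * s) :
    kappa F l q (-(s : ℤ)) * Kbinom F l q c s = 0 := by
  have hl0 : 0 < l := by omega
  have hq0 : q ≠ 0 := hq.ne_zero (by omega)
  have hql : q ^ l = 1 := hq.pow_eq_one
  have hqlz : q ^ (l : ℤ) = 1 := by rw [zpow_natCast]; exact hql
  -- K ^ (2l) = 1
  have hK : KK F l ^ (2 * l) = 1 := by
    have hmem : (X : Polynomial F) ^ (2*l) - 1 ∈
        Ideal.span {(X : Polynomial F) ^ (2 * l) - 1} := Ideal.subset_span rfl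
    have h0 := (Ideal.Quotient.eq_zero_iff_mem).2 hmem
    rw [map_sub, map_pow, map_one, sub_eq_zero] at h0
    rw [KK]
    exact h0
  have hKinv : KK F l * KKinv F l = 1 := by
    rw [KKinv, ← pow_succ']
    rw [show 2*l - 1 + 1 = 2*l by omega]
    exact hK
  set a : F := q ^ (2 * (s : ℤ)) with ha
  have ha0 : a ≠ 0 := zpow_ne_zero _ hq0
  have haN : a ^ (2 * l) = 1 := by
    rw [ha, ← zpow_natCast, ← zpow_mul, show 2 * (s:ℤ) * (2*l : ℕ) = (l : ℤ) * (4 * s) by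
      push_cast; ring, zpow_mul, hqlz, one_zpow]
  set S : QA F l := ∑ i ∈ Finset.range (2 * l), a ^ i • KK F l ^ i with hS
  have hkap : kappa F l q (-(s:ℤ)) = (((2 * l : ℕ) : F))⁻¹ • S := by
    rw [kappa, hS]
    congr 1
    refine Finset.sum_congr rfl fun i _ => ?_
    rw [show -2 * -(s:ℤ) * (i:ℤ) = 2 * (s:ℤ) * (i:ℤ) by ring, zpow_mul, zpow_natCast]
  have hSK : S * KK F l = a⁻¹ • S := by
    obtain ⟨m, hm⟩ : ∃ m, 2 * l = m + 1 := ⟨2*l - 1, by omega⟩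
    have hKm : KK F l ^ (m + 1) = 1 := by rw [← hm]; exact hK
    have hainv : a ^ m = a⁻¹ := by
      refine eq_inv_of_mul_eq_one_left ?_
      rw [← pow_succ, ← hm]; exact haN
    rw [hS, show Finset.range (2*l) = Finset.range (m+1) from by rw [hm], Finset.sum_mul, Finset.sum_range_succ, Finset.sum_range_succ', smul_add]
    congr 1
    · rw [Finset.smul_sum]
      refine Finset.sum_congr rfl fun i _ => ?_
      rw [smul_mul_assoc, ← pow_succ, smul_smul]
      congr 1
      field_simp
      rw [pow_succ]
    · rw [smul_mul_assoc, ← pow_succ, hKm, hainv]; simp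
  have hkK : kappa F l q (-(s:ℤ)) * KK F l = a⁻¹ • kappa F l q (-(s:ℤ)) := by
    rw [hkap, smul_mul_assoc, hSK, smul_comm]
  have hkKinv : kappa F l q (-(s:ℤ)) * KKinv F l = a • kappa F l q (-(s:ℤ)) := by
    have h1 : (kappa F l q (-(s:ℤ)) * KK F l) * KKinv F l = kappa F l q (-(s:ℤ)) := by
      rw [mul_assoc, hKinv, mul_one]
    rw [hkK, smul_mul_assoc] at h1
    have h2 := congrArg (fun x => a • x) h1
    simp only [smul_smul, mul_inv_cancel₀ ha0, one_smul] at h2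
    exact h2
  -- key factor vanishes
  have hqc : q ^ (c - 2*(s:ℤ)) = 1 := by
    obtain ⟨k, hk⟩ := hc
    rw [show c - 2*(s:ℤ) = (l:ℤ) * k by push_cast at hk ⊢; linarith, zpow_mul, hqlz, one_zpow]
  have hkey : kappa F l q (-(s:ℤ)) * (q ^ c • KK F l - q ^ (-c) • KKinv F l) = 0 := by
    rw [mul_sub, mul_smul_comm, mul_smul_comm, hkK, hkKinv, smul_smul, smul_smul]
    have e1 : q ^ c * a⁻¹ = q ^ (c - 2*(s:ℤ)) := by
      rw [ha, ← zpow_neg, ← zpow_add₀ hq0]; ring_nf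
    have e2 : q ^ (-c) * a = q ^ (-(c - 2*(s:ℤ))) := by
      rw [ha, ← zpow_add₀ hq0]; ring_nf
    rw [e1, e2, hqc, zpow_neg, hqc, inv_one, sub_self]
  -- factor out h = 1 from the product
  have h1mem : 1 ∈ Finset.Icc 1 s := Finset.mem_Icc.2 ⟨le_refl 1, hs1⟩
  rw [Kbinom, ← Finset.mul_prod_erase _ _ h1mem, ← mul_assoc]
  have : kappa F l q (-(s:ℤ)) *
      ((q ^ ((1:ℕ) : ℤ) - q ^ (-((1:ℕ):ℤ)))⁻¹ •
        (q ^ (c - (1:ℕ) + 1) • KK F l - q ^ (-(c - (1:ℕ) + 1)) • KKinv F l)) = 0 := by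
    rw [mul_smul_comm, show c - ((1:ℕ):ℤ) + 1 = c by push_cast; ring, hkey, smul_zero]
  rw [this, zero_mul]
end

section
/- For every n ∈ ℤ one has κ_n = (1/2) · Σ_{i=0}^{l−1} (−1)^i [K;−2n;i] (q^i + q^{−i−2n} K) in A. -/
open Polynomial

noncomputable section


namespace Stmt4Aux

open Finset

variable {F : Type*} [Field F]

def Dq (q : F) (m : ℤ) : F := q ^ m - q ^ (-m)

def fct (q : F) (m : ℕ) : F := ∏ h ∈ Finset.Icc 1 m, Dq q (h : ℤ)

def Bc (q : F) (t : ℤ) (i : ℕ) : F :=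
  ∏ h ∈ Finset.Icc 1 i, (Dq q (h : ℤ))⁻¹ * Dq q (t - h + 1)

variable {l : ℕ} {q : F}

lemma q_ne_zero (hl : 1 < l) (hq : IsPrimitiveRoot q l) : q ≠ 0 := by
  intro h
  have := hq.pow_eq_one
  rw [h, zero_pow (by omega)] at this
  exact zero_ne_one this

lemma two_ne_zero' (hchar : ((2 * l : ℕ) : F) ≠ 0) : (2 : F) ≠ 0 := by
  intro h
  apply hchar
  push_cast
  rw [h, zero_mul]

lemma l_ne_zero' (hchar : ((2 * l : ℕ) : F) ≠ 0) : ((l : ℕ) : F) ≠ 0 := by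
  intro h
  apply hchar
  push_cast
  rw [h, mul_zero]

lemma neg_one_ne_one' (hchar : ((2 * l : ℕ) : F) ≠ 0) : (-1 : F) ≠ 1 := by
  intro h
  apply two_ne_zero' hchar
  linear_combination -h

lemma Dq_zero (q : F) : Dq q 0 = 0 := by simp [Dq]

lemma Dq_zero_of_dvd (hl : 1 < l) (hq : IsPrimitiveRoot q l) {m : ℤ} (h : (l : ℤ) ∣ m) :
    Dq q m = 0 := by
  have h1 : q ^ m = 1 := (hq.zpow_eq_one_iff_dvd m).2 h
  have h2 : q ^ (-m) = 1 := (hq.zpow_eq_one_iff_dvd (-m)).2 (dvd_neg.2 h)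
  simp [Dq, h1, h2]

lemma Dq_ne_zero (hl : 1 < l) (hodd : Odd l) (hq : IsPrimitiveRoot q l)
    {h : ℕ} (h1 : 1 ≤ h) (h2 : h < l) : Dq q (h : ℤ) ≠ 0 := by
  have hq0 : q ≠ 0 := q_ne_zero hl hq
  intro hD
  have he : q ^ (h : ℤ) = q ^ (-(h : ℤ)) := sub_eq_zero.mp hD
  have h2h : q ^ (2 * h) = 1 := by
    have : q ^ ((h : ℤ) + (h : ℤ)) = q ^ ((h:ℤ) + -(h:ℤ)) := by
      rw [zpow_add₀ hq0, zpow_add₀ hq0, he]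
    have h2 : q ^ ((2 * h : ℕ) : ℤ) = 1 := by
      push_cast
      rw [two_mul]
      simpa using this
    rwa [zpow_natCast] at h2
  have hdvd : l ∣ 2 * h := (hq.pow_eq_one_iff_dvd _).1 h2h
  have hcop : Nat.Coprime l 2 := hodd.coprime_two_right
  have hld : l ∣ h := hcop.dvd_of_dvd_mul_left hdvd
  have := Nat.le_of_dvd (by omega) hld
  omega

lemma fct_ne_zero (hl : 1 < l) (hodd : Odd l) (hq : IsPrimitiveRoot q l)
    {m : ℕ} (hm : m < l) : fct q m ≠ 0 := by
  apply Finset.prod_ne_zero_iff.2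
  intro h hh
  rw [Finset.mem_Icc] at hh
  exact Dq_ne_zero hl hodd hq hh.1 (by omega)

lemma Bc_eq (q : F) (t : ℤ) (i : ℕ) :
    Bc q t i = (fct q i)⁻¹ * ∏ h ∈ Finset.Icc 1 i, Dq q (t - h + 1) := by
  rw [Bc, Finset.prod_mul_distrib, Finset.prod_inv_distrib, fct]

lemma Bc_zero_of_lt (q : F) {m i : ℕ} (h : m < i) : Bc q (m : ℤ) i = 0 := by
  rw [Bc]
  apply Finset.prod_eq_zero (i := m + 1) (by rw [Finset.mem_Icc]; omega)
  have : ((m : ℤ) - (m + 1 : ℕ) + 1) = 0 := by push_cast; ring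
  rw [this, Dq_zero, mul_zero]

lemma Dq_period (hl : 1 < l) (hq : IsPrimitiveRoot q l) (x : ℤ) (s : ℤ) :
    Dq q (x + l * s) = Dq q x := by
  have hq0 : q ≠ 0 := q_ne_zero hl hq
  have hl1 : q ^ ((l : ℤ) * s) = 1 := (hq.zpow_eq_one_iff_dvd _).2 ⟨s, rfl⟩
  have hl2 : q ^ (-((l : ℤ) * s)) = 1 := (hq.zpow_eq_one_iff_dvd _).2 ⟨-s, by ring⟩
  rw [Dq, Dq, zpow_add₀ hq0, neg_add, zpow_add₀ hq0, hl1, hl2, mul_one, mul_one]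


def Nq (q : F) (t : ℤ) (i : ℕ) : F := ∏ j ∈ Finset.range i, Dq q (t - j)

lemma Bc_eq' (q : F) (t : ℤ) (i : ℕ) : Bc q t i = (fct q i)⁻¹ * Nq q t i := by
  rw [Bc_eq, Nq]
  congr 1
  rw [← Finset.Ico_add_one_right_eq_Icc, Finset.prod_Ico_eq_prod_range]
  apply Finset.prod_congr (by simp) (fun j _ => ?_)
  congr 1
  push_cast
  ring

lemma Nq_succ_top (q : F) (t : ℤ) (i : ℕ) : Nq q t (i + 1) = Nq q t i * Dq q (t - i) := by
  rw [Nq, Finset.prod_range_succ, Nq]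

lemma Nq_succ_bot (q : F) (t : ℤ) (i : ℕ) : Nq q (t + 1) (i + 1) = Nq q t i * Dq q (t + 1) := by
  rw [Nq, Finset.prod_range_succ']
  congr 1
  · apply Finset.prod_congr rfl (fun j _ => ?_)
    congr 1
    push_cast
    ring
  · congr 1
    push_cast
    ring

lemma fct_succ (q : F) (i : ℕ) : fct q (i + 1) = fct q i * Dq q ((i : ℤ) + 1) := by
  rw [fct, Finset.prod_Icc_succ_top (by omega), fct]
  norm_cast

lemma Nq_eq_Ioc (q : F) {m i : ℕ} (him : i ≤ m) :
    Nq q (m : ℤ) i = ∏ j ∈ Finset.Ioc (m - i) m, Dq q (j : ℤ) := by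
  rw [Nq]
  apply Finset.prod_bij' (fun j _ => m - j) (fun k _ => m - k)
  · intro a ha
    rw [Finset.mem_range] at ha
    rw [Finset.mem_Ioc]
    omega
  · intro a ha
    rw [Finset.mem_Ioc] at ha
    rw [Finset.mem_range]
    omega
  · intro a ha
    rw [Finset.mem_range] at ha
    omega
  · intro a ha
    rw [Finset.mem_Ioc] at ha
    omega
  · intro a ha
    rw [Finset.mem_range] at ha
    congr 1
    omega

lemma fct_eq_Ioc (q : F) (m : ℕ) : fct q m = ∏ j ∈ Finset.Ioc 0 m, Dq q (j : ℤ) := by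
  rw [fct, ← Finset.Icc_add_one_left_eq_Ioc, zero_add]

lemma Nq_mul_fct (q : F) {m i : ℕ} (him : i ≤ m) :
    fct q (m - i) * Nq q (m : ℤ) i = fct q m := by
  rw [Nq_eq_Ioc q him, fct_eq_Ioc, fct_eq_Ioc, Finset.prod_Ioc_consecutive _ (by omega) (by omega)]

lemma Bc_factorial (hl : 1 < l) (hodd : Odd l) (hq : IsPrimitiveRoot q l)
    {m i : ℕ} (him : i ≤ m) (hm : m < l) :
    Bc q (m : ℤ) i = fct q m * ((fct q i)⁻¹ * (fct q (m - i))⁻¹) := by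
  have h1 : fct q (m - i) ≠ 0 := fct_ne_zero hl hodd hq (by omega)
  rw [Bc_eq']
  have h2 : Nq q (m : ℤ) i = fct q m * (fct q (m - i))⁻¹ := by
    field_simp
    rw [mul_comm, Nq_mul_fct q him]
  rw [h2]
  ring

lemma Bc_symm (hl : 1 < l) (hodd : Odd l) (hq : IsPrimitiveRoot q l)
    {m i : ℕ} (him : i ≤ m) (hm : m < l) :
    Bc q (m : ℤ) i = Bc q (m : ℤ) (m - i) := by
  rw [Bc_factorial hl hodd hq him hm, Bc_factorial hl hodd hq (by omega) hm]
  have : m - (m - i) = i := by omega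
  rw [this]
  ring

lemma key_id (q : F) (hq0 : q ≠ 0) (m i : ℤ) :
    Dq q (m + 1) = q ^ (-(i + 1)) * Dq q (m - i) + q ^ (m - i) * Dq q (i + 1) := by
  have e : ∀ x y : ℤ, q ^ (x + y) = q ^ x * q ^ y := fun x y => zpow_add₀ hq0 x y
  have h1 : q ^ m ≠ 0 := zpow_ne_zero _ hq0
  have h2 : q ^ i ≠ 0 := zpow_ne_zero _ hq0
  simp only [Dq, sub_eq_add_neg, neg_add, neg_neg, e, zpow_neg, zpow_one]
  field_simp
  ring

lemma pascal (hl : 1 < l) (hodd : Odd l) (hq : IsPrimitiveRoot q l)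
    (m : ℕ) {i : ℕ} (hi : i + 1 < l) :
    Bc q ((m : ℤ) + 1) (i + 1) =
      q ^ (-((i : ℤ) + 1)) * Bc q (m : ℤ) (i + 1) + q ^ ((m : ℤ) - i) * Bc q (m : ℤ) i := by
  have hq0 : q ≠ 0 := q_ne_zero hl hq
  have hD : Dq q ((i : ℤ) + 1) ≠ 0 := by
    have := Dq_ne_zero hl hodd hq (h := i + 1) (by omega) hi
    simpa [Nat.cast_add] using this
  have hfi : fct q i ≠ 0 := fct_ne_zero hl hodd hq (by omega)
  have key : Dq q ((m : ℤ) + 1) =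
      q ^ (-((i : ℤ) + 1)) * Dq q ((m : ℤ) - i) + q ^ ((m : ℤ) - i) * Dq q ((i : ℤ) + 1) :=
    key_id q hq0 (m : ℤ) (i : ℤ)
  rw [Bc_eq', Bc_eq', Bc_eq', Nq_succ_bot, Nq_succ_top, fct_succ, key]
  field_simp


lemma Bc_zero_right (q : F) (t : ℤ) : Bc q t 0 = 1 := by simp [Bc]

lemma qbinom (hl : 1 < l) (hodd : Odd l) (hq : IsPrimitiveRoot q l) :
    ∀ m : ℕ, m < l → ∀ z : F,
      ∑ i ∈ Finset.range (m + 1), Bc q (m : ℤ) i * z ^ i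
        = ∏ j ∈ Finset.range m, (1 + q ^ ((m : ℤ) - 1 - 2 * (j : ℤ)) * z) := by
  have hq0 : q ≠ 0 := q_ne_zero hl hq
  intro m
  induction m with
  | zero => intro _ z; simp [Bc_zero_right]
  | succ m ih =>
    intro hm z
    have hm' : m < l := by omega
    have hstep : ∀ i ∈ Finset.range (m + 2),
        Bc q (((m + 1 : ℕ) : ℤ)) i * z ^ i =
          q ^ (-(i : ℤ)) * Bc q (m : ℤ) i * z ^ i +
            (if i = 0 then 0 else q ^ ((m : ℤ) + 1 - i) * Bc q (m : ℤ) (i - 1) * z ^ i) := by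
      intro i hi
      rw [Finset.mem_range] at hi
      match i with
      | 0 => simp [Bc_zero_right]
      | (j + 1) =>
        have hj : j + 1 < l := by omega
        have hp := pascal hl hodd hq m hj
        have hc : ((m + 1 : ℕ) : ℤ) = (m : ℤ) + 1 := by push_cast; ring
        rw [hc, hp]
        simp only [if_neg (Nat.succ_ne_zero j), Nat.add_sub_cancel]
        push_cast
        ring
    rw [Finset.sum_congr rfl hstep, Finset.sum_add_distrib]
    have e1 : ∑ i ∈ Finset.range (m + 2), q ^ (-(i : ℤ)) * Bc q (m : ℤ) i * z ^ i
        = ∑ i ∈ Finset.range (m + 1), Bc q (m : ℤ) i * (q⁻¹ * z) ^ i := by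
      rw [Finset.sum_range_succ]
      rw [Bc_zero_of_lt q (by omega)]
      rw [mul_zero, zero_mul, add_zero]
      apply Finset.sum_congr rfl
      intro i _
      have : q ^ (-(i:ℤ)) = q⁻¹ ^ i := by rw [zpow_neg, zpow_natCast, inv_pow]
      rw [mul_pow, this]
      ring
    have e2 : ∑ i ∈ Finset.range (m + 2),
        (if i = 0 then (0:F) else q ^ ((m : ℤ) + 1 - i) * Bc q (m : ℤ) (i - 1) * z ^ i)
        = q ^ (m : ℤ) * z * ∑ i ∈ Finset.range (m + 1), Bc q (m : ℤ) i * (q⁻¹ * z) ^ i := by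
      rw [Finset.sum_range_succ']
      simp only [Nat.succ_ne_zero, if_false, eq_self_iff_true, if_true, add_zero, Nat.add_sub_cancel]
      rw [Finset.mul_sum]
      apply Finset.sum_congr rfl
      intro i _
      have he : q ^ ((m : ℤ) + 1 - ((i:ℤ) + 1)) = q ^ (m : ℤ) * (q⁻¹) ^ i := by
        have h2 : (q⁻¹) ^ i = q ^ (-(i:ℤ)) := by rw [zpow_neg, zpow_natCast, inv_pow]
        rw [h2, ← zpow_add₀ hq0]
        congr 1
        ring
      push_cast
      rw [he]
      rw [mul_pow]
      ring
    rw [e1, e2, ih hm' (q⁻¹ * z)]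
    rw [Finset.prod_range_succ']
    have e3 : ∀ j ∈ Finset.range m,
        (1 + q ^ ((m : ℤ) - 1 - 2 * (j : ℤ)) * (q⁻¹ * z))
          = 1 + q ^ (((m + 1 : ℕ) : ℤ) - 1 - 2 * ((j + 1 : ℕ) : ℤ)) * z := by
      intro j _
      have : q ^ ((m : ℤ) - 1 - 2 * (j : ℤ)) * q⁻¹ = q ^ (((m + 1 : ℕ) : ℤ) - 1 - 2 * ((j + 1 : ℕ) : ℤ)) := by
        rw [← zpow_neg_one, ← zpow_add₀ hq0]
        congr 1
        push_cast
        ring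
      rw [← mul_assoc, this]
    rw [← Finset.prod_congr rfl e3]
    have e4 : (1 : F) + q ^ (((m + 1 : ℕ) : ℤ) - 1 - 2 * ((0 : ℕ) : ℤ)) * z = 1 + q ^ (m : ℤ) * z := by
      norm_num
    rw [e4]
    ring


open scoped Classical in
lemma scalar_sum (hl : 1 < l) (hodd : Odd l) (hchar : ((2 * l : ℕ) : F) ≠ 0)
    (hq : IsPrimitiveRoot q l) (ε : F) (hε : ε = 1 ∨ ε = -1) {m : ℕ} (hm : m < l) :
    ∑ i ∈ Finset.range l, (-ε) ^ i * Bc q (m : ℤ) i * (q ^ (i : ℤ) + ε * q ^ ((m : ℤ) - i))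
      = if ε = 1 ∧ m = 0 then 2 else 0 := by
  have hq0 : q ≠ 0 := q_ne_zero hl hq
  have hε2 : ε * ε = 1 := by rcases hε with h | h <;> rw [h] <;> ring
  -- truncate the sum to range (m+1)
  have htrunc : ∑ i ∈ Finset.range l, (-ε) ^ i * Bc q (m : ℤ) i * (q ^ (i : ℤ) + ε * q ^ ((m : ℤ) - i))
      = ∑ i ∈ Finset.range (m + 1), (-ε) ^ i * Bc q (m : ℤ) i * (q ^ (i : ℤ) + ε * q ^ ((m : ℤ) - i)) := by
    symm
    apply Finset.sum_subset (Finset.range_subset_range.2 (by omega))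
    intro i _ hi
    rw [Finset.mem_range, not_lt] at hi
    rw [Bc_zero_of_lt q (by omega)]
    ring
  rw [htrunc]
  set A := ∑ i ∈ Finset.range (m + 1), (-ε) ^ i * Bc q (m : ℤ) i * q ^ (i : ℤ) with hA
  have hsplit : ∑ i ∈ Finset.range (m + 1), (-ε) ^ i * Bc q (m : ℤ) i * (q ^ (i : ℤ) + ε * q ^ ((m : ℤ) - i))
      = A + ε * ∑ i ∈ Finset.range (m + 1), (-ε) ^ i * Bc q (m : ℤ) i * q ^ ((m : ℤ) - i) := by
    rw [hA, Finset.mul_sum, ← Finset.sum_add_distrib]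
    apply Finset.sum_congr rfl
    intro i _
    ring
  rw [hsplit]
  have hrefl : ∑ i ∈ Finset.range (m + 1), (-ε) ^ i * Bc q (m : ℤ) i * q ^ ((m : ℤ) - i)
      = (-ε) ^ m * A := by
    rw [← Finset.sum_range_reflect]
    rw [hA, Finset.mul_sum]
    apply Finset.sum_congr rfl
    intro i hi
    rw [Finset.mem_range] at hi
    have him : i ≤ m := by omega
    have h1 : m + 1 - 1 - i = m - i := by omega
    rw [h1]
    have h2 : Bc q (m : ℤ) (m - i) = Bc q (m : ℤ) i := by
      rw [← Bc_symm hl hodd hq him hm]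
    rw [h2]
    have h3 : ((m : ℤ) - ((m - i : ℕ) : ℤ)) = (i : ℤ) := by omega
    rw [h3]
    have h4 : (-ε) ^ (m - i) = (-ε) ^ m * (-ε) ^ i := by
      have h5 : (-ε) ^ (m - i) * (-ε) ^ i = (-ε) ^ m := by
        rw [← pow_add]
        congr 1
        omega
      have h6 : (-ε) ^ i * (-ε) ^ i = 1 := by
        rw [← mul_pow]
        have : -ε * -ε = 1 := by rw [neg_mul_neg, hε2]
        rw [this, one_pow]
      calc (-ε) ^ (m - i) = (-ε) ^ (m - i) * ((-ε) ^ i * (-ε) ^ i) := by rw [h6, mul_one]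
        _ = ((-ε) ^ (m - i) * (-ε) ^ i) * (-ε) ^ i := by ring
        _ = (-ε) ^ m * (-ε) ^ i := by rw [h5]
    rw [h4]
    ring
  rw [hrefl]
  have hAeq : A = ∑ i ∈ Finset.range (m + 1), Bc q (m : ℤ) i * (-ε * q) ^ i := by
    rw [hA]
    apply Finset.sum_congr rfl
    intro i _
    rw [mul_pow, zpow_natCast]
    ring
  rcases hε with h1 | h1
  · subst h1
    by_cases hm0 : m = 0
    · subst hm0
      have : A = 1 := by
        rw [hAeq, qbinom hl hodd hq 0 (by omega), Finset.prod_range_zero]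
      rw [this]
      norm_num
    · rw [if_neg (by simp [hm0])]
      rcases Nat.even_or_odd m with he | ho
      · -- m even and nonzero : A = 0
        have hA0 : A = 0 := by
          rw [hAeq, qbinom hl hodd hq m hm]
          apply Finset.prod_eq_zero (i := m / 2) (Finset.mem_range.2 (by omega))
          have hexp : ((m : ℤ) - 1 - 2 * ((m / 2 : ℕ) : ℤ)) = -1 := by
            rcases he with ⟨k, hk⟩
            subst hk
            have : (k + k) / 2 = k := by omega
            rw [this]
            push_cast
            ring
          rw [hexp, zpow_neg_one]
          field_simp
          ring
        rw [hA0]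
        ring
      · -- m odd : coefficient vanishes
        have : (-(1:F)) ^ m = -1 := ho.neg_one_pow
        rw [this]
        ring
  · subst h1
    rw [if_neg (by simp [neg_one_ne_one' hchar])]
    have : (-(-1:F)) ^ m = 1 := by rw [neg_neg, one_pow]
    rw [this]
    ring


lemma zpow_period (hl : 1 < l) (hq : IsPrimitiveRoot q l) (x s : ℤ) :
    q ^ (x + l * s) = q ^ x := by
  rw [zpow_add₀ (q_ne_zero hl hq), (hq.zpow_eq_one_iff_dvd _).2 ⟨s, rfl⟩, mul_one]

lemma Bc_period (hl : 1 < l) (hq : IsPrimitiveRoot q l) (t : ℤ) (s : ℤ) (i : ℕ) :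
    Bc q (t + l * s) i = Bc q t i := by
  rw [Bc, Bc]
  apply Finset.prod_congr rfl
  intro h _
  congr 1
  have he : t + (l:ℤ) * s - h + 1 = (t - h + 1) + l * s := by ring
  rw [he, Dq_period hl hq]

open scoped Classical in
lemma scalar_main (hl : 1 < l) (hodd : Odd l) (hchar : ((2 * l : ℕ) : F) ≠ 0)
    (hq : IsPrimitiveRoot q l) (ε : F) (hε : ε = 1 ∨ ε = -1) (t : ℤ) :
    ∑ i ∈ Finset.range l, (-ε) ^ i * Bc q t i * (q ^ (i : ℤ) + ε * q ^ (t - i))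
      = if ε = 1 ∧ q ^ t = 1 then 2 else 0 := by
  have hl0 : (0 : ℤ) < l := by exact_mod_cast Nat.zero_lt_of_lt hl
  have hm'0 : 0 ≤ t % l := Int.emod_nonneg t (by omega)
  have hm'l : t % l < l := Int.emod_lt_of_pos t hl0
  set m := (t % l).toNat with hmdef
  have hmc : (m : ℤ) = t % l := Int.toNat_of_nonneg hm'0
  have hml : m < l := by omega
  have ht : t = (m : ℤ) + l * (t / l) := by
    rw [hmc]
    exact (Int.emod_add_mul_ediv t l).symm
  have h1 : ∀ i ∈ Finset.range l,
      (-ε) ^ i * Bc q t i * (q ^ (i : ℤ) + ε * q ^ (t - i))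
        = (-ε) ^ i * Bc q (m : ℤ) i * (q ^ (i : ℤ) + ε * q ^ ((m : ℤ) - i)) := by
    intro i _
    have hb : Bc q t i = Bc q (m : ℤ) i := by
      conv_lhs => rw [ht]
      rw [Bc_period hl hq]
    have hz : q ^ (t - i) = q ^ ((m : ℤ) - i) := by
      have he : t - (i : ℤ) = ((m : ℤ) - i) + l * (t / l) := by omega
      rw [he, zpow_period hl hq]
    rw [hb, hz]
  rw [Finset.sum_congr rfl h1, scalar_sum hl hodd hchar hq ε hε hml]
  have hcond : (ε = 1 ∧ q ^ t = 1) ↔ (ε = 1 ∧ m = 0) := by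
    have hz : q ^ t = q ^ (m : ℤ) := by
      conv_lhs => rw [ht]
      rw [zpow_period hl hq]
    rw [hz, zpow_natCast]
    constructor
    · rintro ⟨a, b⟩
      refine ⟨a, ?_⟩
      have hdvd := (hq.pow_eq_one_iff_dvd m).1 b
      rcases Nat.eq_zero_or_pos m with h0 | h0
      · exact h0
      · exact absurd (Nat.le_of_dvd h0 hdvd) (by omega)
    · rintro ⟨a, b⟩
      exact ⟨a, by rw [b, pow_zero]⟩
  rw [if_congr hcond rfl rfl]

section Algebra

variable (F : Type*) [Field F] (l : ℕ)

def evA (a : F) (ha : a ^ (2 * l) = 1) : QA F l →ₐ[F] F :=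
  Ideal.Quotient.liftₐ _ (Polynomial.aeval a) (fun p hp => by
    rw [Ideal.mem_span_singleton] at hp
    obtain ⟨c, rfl⟩ := hp
    rw [map_mul, map_sub, map_pow, Polynomial.aeval_X, map_one, ha, sub_self, zero_mul])

lemma evA_mk (a : F) (ha : a ^ (2 * l) = 1) (p : Polynomial F) :
    evA F l a ha (Ideal.Quotient.mk _ p) = Polynomial.aeval a p := by
  rw [evA, Ideal.Quotient.liftₐ_apply]
  rfl

lemma evA_K (a : F) (ha : a ^ (2 * l) = 1) : evA F l a ha (KK F l) = a := by
  rw [KK, evA_mk, Polynomial.aeval_X]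

lemma evA_Kinv (a : F) (ha : a ^ (2 * l) = 1) :
    evA F l a ha (KKinv F l) = a ^ (2 * l - 1) := by
  rw [KKinv, map_pow, evA_K]

variable {F l}

lemma root_pow {q : F} (hq : IsPrimitiveRoot q l) (k : ℕ) :
    ((-q) ^ k) ^ (2 * l) = 1 := by
  rw [← pow_mul, mul_comm k, pow_mul]
  have h1 : (-q) ^ (2 * l) = 1 := by
    rw [Even.neg_pow ⟨l, two_mul l⟩, mul_comm 2 l, pow_mul, hq.pow_eq_one, one_pow]
  rw [h1, one_pow]

lemma neg_q_injOn (hl : 1 < l) (hodd : Odd l) (hchar : ((2 * l : ℕ) : F) ≠ 0)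
    {q : F} (hq : IsPrimitiveRoot q l) :
    ∀ k1 < 2 * l, ∀ k2 < 2 * l, (-q) ^ k1 = (-q) ^ k2 → k1 = k2 := by
  have hq0 : q ≠ 0 := q_ne_zero hl hq
  have key : ∀ d, d < 2 * l → (-q) ^ d = 1 → d = 0 := by
    intro d hd hd1
    by_contra hd0
    have hdl : d = l → False := by
      intro hdeq
      rw [hdeq] at hd1
      have hql : q ^ l = 1 := hq.pow_eq_one
      rw [Odd.neg_pow hodd, hql] at hd1
      exact (neg_one_ne_one' hchar) hd1
    have hdvd : l ∣ d := by
      rcases Nat.even_or_odd d with he | ho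
      · have hqd : q ^ d = 1 := by rwa [Even.neg_pow he] at hd1
        exact (hq.pow_eq_one_iff_dvd d).1 hqd
      · have hqd : q ^ d = -1 := by
          rw [Odd.neg_pow ho] at hd1
          linear_combination -hd1
        have h2d : q ^ (2 * d) = 1 := by
          rw [two_mul, pow_add, hqd]
          ring
        have h2dvd : l ∣ 2 * d := (hq.pow_eq_one_iff_dvd _).1 h2d
        exact (hodd.coprime_two_right).dvd_of_dvd_mul_left h2dvd
    obtain ⟨c, rfl⟩ := hdvd
    apply hdl
    have hc : c = 1 := by
      rcases Nat.lt_or_ge c 2 with h | h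
      · interval_cases c
        · omega
        · rfl
      · have := Nat.mul_le_mul_left l h
        omega
    rw [hc, mul_one]
  intro k1 hk1 k2 hk2 hk
  have hnq0 : (-q) ≠ 0 := neg_ne_zero.2 hq0
  rcases le_total k1 k2 with hle | hle
  · have h1 : (-q) ^ (k2 - k1) = 1 := by
      rw [pow_sub₀ _ hnq0 hle, ← hk, mul_inv_cancel₀ (pow_ne_zero _ hnq0)]
    have := key _ (by omega) h1
    omega
  · have h1 : (-q) ^ (k1 - k2) = 1 := by
      rw [pow_sub₀ _ hnq0 hle, hk, mul_inv_cancel₀ (pow_ne_zero _ hnq0)]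
    have := key _ (by omega) h1
    omega

lemma ext_QA (hl : 1 < l) (hodd : Odd l) (hchar : ((2 * l : ℕ) : F) ≠ 0)
    {q : F} (hq : IsPrimitiveRoot q l) {x y : QA F l}
    (hxy : ∀ k, k < 2 * l →
      evA F l ((-q) ^ k) (root_pow hq k) x = evA F l ((-q) ^ k) (root_pow hq k) y) :
    x = y := by
  classical
  obtain ⟨p, rfl⟩ := Ideal.Quotient.mk_surjective x
  obtain ⟨p', rfl⟩ := Ideal.Quotient.mk_surjective y
  rw [Ideal.Quotient.eq, Ideal.mem_span_singleton]
  set f : Polynomial F := X ^ (2 * l) - 1 with hf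
  have hmonic : f.Monic := by
    have := Polynomial.monic_X_pow_sub_C (1 : F) (n := 2 * l) (by omega)
    simpa [hf] using this
  rw [← Polynomial.modByMonic_eq_zero_iff_dvd hmonic]
  set g : Polynomial F := p - p' with hg
  have heval : ∀ k, k < 2 * l → (g %ₘ f).eval ((-q) ^ k) = 0 := by
    intro k hk
    have hgev : g.eval ((-q) ^ k) = 0 := by
      have h1 := hxy k hk
      rw [evA_mk, evA_mk] at h1
      have h2 : Polynomial.aeval ((-q) ^ k) g = 0 := by
        rw [hg, map_sub, h1, sub_self]
      rwa [Polynomial.coe_aeval_eq_eval] at h2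
    have hfev : f.eval ((-q) ^ k) = 0 := by
      rw [hf]
      simp [root_pow hq k]
    have hdecomp := Polynomial.modByMonic_add_div g f
    have := congrArg (Polynomial.eval ((-q) ^ k)) hdecomp
    rw [Polynomial.eval_add, Polynomial.eval_mul, hfev, zero_mul, add_zero] at this
    rw [this, hgev]
  set s : Finset F := (Finset.range (2 * l)).image (fun k => (-q) ^ k) with hs
  have hcard : s.card = 2 * l := by
    rw [hs, Finset.card_image_of_injOn, Finset.card_range]
    intro k1 hk1 k2 hk2 hk
    rw [Finset.mem_coe, Finset.mem_range] at hk1 hk2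
    exact neg_q_injOn hl hodd hchar hq k1 hk1 k2 hk2 hk
  apply Polynomial.eq_zero_of_natDegree_lt_card_of_eval_eq_zero' (g %ₘ f) s
  · intro b hb
    rw [hs, Finset.mem_image] at hb
    obtain ⟨k, hk, rfl⟩ := hb
    exact heval k (Finset.mem_range.1 hk)
  · rw [hcard]
    have hfd : f.natDegree = 2 * l := by
      rw [hf]
      have := Polynomial.natDegree_X_pow_sub_C (n := 2 * l) (r := (1 : F))
      simpa using this
    have hne1 : f ≠ 1 := by
      intro h
      have := congrArg Polynomial.natDegree h
      rw [hfd, Polynomial.natDegree_one] at this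
      omega
    have := Polynomial.natDegree_modByMonic_lt g hmonic hne1
    omega

end Algebra

section Eval

variable {F : Type*} [Field F] {l : ℕ} {q : F}

lemma evA_Kbinom (hl : 1 < l) (hodd : Odd l) (hq : IsPrimitiveRoot q l) (c : ℤ) (i k : ℕ) :
    evA F l ((-q) ^ k) (root_pow hq k) (Kbinom F l q c i)
      = ((-1 : F) ^ k) ^ i * Bc q (c + k) i := by
  have hq0 : q ≠ 0 := q_ne_zero hl hq
  have hne : ((-q) ^ k) ≠ 0 := pow_ne_zero _ (neg_ne_zero.2 hq0)
  have hainv : ((-q) ^ k)⁻¹ = (-1 : F) ^ k * q ^ (-(k : ℤ)) := by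
    apply inv_eq_of_mul_eq_one_right
    rw [neg_pow q k, ← zpow_natCast q k]
    have h1 : ((-1:F) ^ k * q ^ (k:ℤ)) * ((-1:F) ^ k * q ^ (-(k:ℤ)))
        = ((-1:F) ^ k * (-1:F) ^ k) * (q ^ (k:ℤ) * q ^ (-(k:ℤ))) := by ring
    rw [h1, ← pow_add, ← zpow_add₀ hq0, add_neg_cancel, zpow_zero, mul_one]
    rw [← two_mul, pow_mul]
    norm_num
  have ha : ((-q) ^ k) ^ (2 * l - 1) = (-1 : F) ^ k * q ^ (-(k : ℤ)) := by
    rw [← hainv]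
    apply inv_eq_of_mul_eq_one_right ((?_ : ((-q)^k) * ((-q)^k)^(2*l-1) = 1)) |>.symm
    rw [← pow_succ']
    have h2 : 2 * l - 1 + 1 = 2 * l := by omega
    rw [h2]
    exact root_pow hq k
  have ha' : (-q) ^ k = (-1 : F) ^ k * q ^ (k : ℤ) := by
    rw [neg_pow q k, zpow_natCast]
  rw [Kbinom, map_prod, Bc]
  have hterm : ∀ h ∈ Finset.Icc 1 i,
      evA F l ((-q) ^ k) (root_pow hq k)
          ((q ^ (h : ℤ) - q ^ (-(h : ℤ)))⁻¹ •
            (q ^ (c - h + 1) • KK F l - q ^ (-(c - h + 1)) • KKinv F l))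
        = (-1 : F) ^ k * ((Dq q (h : ℤ))⁻¹ * Dq q ((c + k) - h + 1)) := by
    intro h _
    rw [map_smul, map_sub, map_smul, map_smul, evA_K, evA_Kinv, ha, ha']
    have e1 : q ^ (c - h + 1) * q ^ (k : ℤ) = q ^ ((c + k) - h + 1) := by
      rw [← zpow_add₀ hq0]
      congr 1
      ring
    have e2 : q ^ (-(c - h + 1)) * q ^ (-(k : ℤ)) = q ^ (-((c + k) - h + 1)) := by
      rw [← zpow_add₀ hq0]
      congr 1
      ring
    rw [Dq, Dq]
    rw [show q ^ (c - h + 1) • ((-1:F) ^ k * q ^ (k:ℤ)) = (-1:F)^k * (q ^ (c - h + 1) * q ^ (k:ℤ)) from by rw [smul_eq_mul]; ring]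
    rw [show q ^ (-(c - h + 1)) • ((-1:F) ^ k * q ^ (-(k:ℤ))) = (-1:F)^k * (q ^ (-(c - h + 1)) * q ^ (-(k:ℤ))) from by rw [smul_eq_mul]; ring]
    rw [e1, e2, smul_eq_mul]
    ring
  rw [Finset.prod_congr rfl hterm, Finset.prod_mul_distrib, Finset.prod_const, Nat.card_Icc]
  norm_num

open scoped Classical in
lemma evA_kappa (hl : 1 < l) (hodd : Odd l) (hchar : ((2 * l : ℕ) : F) ≠ 0)
    (hq : IsPrimitiveRoot q l) (n : ℤ) (k : ℕ) :
    evA F l ((-q) ^ k) (root_pow hq k) (kappa F l q n)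
      = if q ^ (-2 * n) * (-q) ^ k = 1 then 1 else 0 := by
  have hq0 : q ≠ 0 := q_ne_zero hl hq
  rw [kappa, map_smul, map_sum]
  have hterm : ∀ i ∈ Finset.range (2 * l),
      evA F l ((-q) ^ k) (root_pow hq k) (q ^ (-2 * n * (i : ℤ)) • KK F l ^ i)
        = (q ^ (-2 * n) * (-q) ^ k) ^ i := by
    intro i _
    rw [map_smul, map_pow, evA_K, smul_eq_mul, mul_pow]
    congr 1
    rw [zpow_mul, zpow_natCast]
  rw [Finset.sum_congr rfl hterm]
  set r := q ^ (-2 * n) * (-q) ^ k with hrdef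
  have hr2l : r ^ (2 * l) = 1 := by
    rw [hrdef, mul_pow, root_pow hq k, mul_one]
    rw [← zpow_natCast (q ^ (-2 * n)) (2 * l), ← zpow_mul, mul_comm, zpow_mul, zpow_natCast]
    rw [mul_comm 2 l, pow_mul, hq.pow_eq_one, one_pow, one_zpow]
  by_cases hr : r = 1
  · rw [if_pos hr, hr]
    simp only [one_pow, Finset.sum_const, Finset.card_range, nsmul_eq_mul, mul_one, smul_eq_mul]
    exact inv_mul_cancel₀ hchar
  · rw [if_neg hr]
    have hgs := geom_sum_mul r (2 * l)
    rw [hr2l, sub_self] at hgs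
    have hsum : ∑ i ∈ Finset.range (2 * l), r ^ i = 0 := by
      rcases mul_eq_zero.1 hgs with h | h
      · exact h
      · exact absurd (sub_eq_zero.1 h) hr
    rw [hsum, smul_zero]

lemma cond_iff (hl : 1 < l) (hodd : Odd l) (hchar : ((2 * l : ℕ) : F) ≠ 0)
    (hq : IsPrimitiveRoot q l) (k : ℕ) (t : ℤ) :
    ((-1 : F) ^ k * q ^ t = 1) ↔ ((-1 : F) ^ k = 1 ∧ q ^ t = 1) := by
  have hq0 : q ≠ 0 := q_ne_zero hl hq
  rcases Nat.even_or_odd k with he | ho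
  · rw [he.neg_one_pow, one_mul]
    simp
  · rw [ho.neg_one_pow]
    constructor
    · intro h
      exfalso
      have hqt : q ^ t = -1 := by linear_combination -h
      have h1 : (q ^ t) ^ l = 1 := by
        rw [← zpow_natCast (q ^ t) l, ← zpow_mul, mul_comm, zpow_mul, zpow_natCast,
          hq.pow_eq_one, one_zpow]
      rw [hqt, hodd.neg_one_pow] at h1
      exact (neg_one_ne_one' hchar) h1
    · rintro ⟨h1, _⟩
      exact absurd h1 (neg_one_ne_one' hchar)

end Eval

end Stmt4Aux







open Stmt4Aux

theorem stmt4 (l : ℕ) (hl : 1 < l) (hodd : Odd l)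
    (F : Type*) [Field F] (hchar : ((2 * l : ℕ) : F) ≠ 0)
    (q : F) (hq : IsPrimitiveRoot q l) (n : ℤ) :
    kappa F l q n =
      (2 : F)⁻¹ • ∑ i ∈ Finset.range l,
        (-1 : F) ^ i •
          (Kbinom F l q (-2 * n) i *
            (algebraMap F (QA F l) (q ^ (i : ℤ)) + q ^ (-(i : ℤ) - 2 * n) • KK F l)) := by
  have hq0 : q ≠ 0 := q_ne_zero hl hq
  apply ext_QA hl hodd hchar hq
  intro k hk
  rw [evA_kappa hl hodd hchar hq n k]
  rw [map_smul, map_sum]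
  have hterm : ∀ i ∈ Finset.range l,
      evA F l ((-q) ^ k) (root_pow hq k)
          ((-1 : F) ^ i •
            (Kbinom F l q (-2 * n) i *
              (algebraMap F (QA F l) (q ^ (i : ℤ)) + q ^ (-(i : ℤ) - 2 * n) • KK F l)))
        = (-(-1 : F) ^ k) ^ i * Bc q (-2 * n + k) i
            * (q ^ (i : ℤ) + (-1 : F) ^ k * q ^ ((-2 * n + (k : ℤ)) - i)) := by
    intro i _
    rw [map_smul, map_mul, map_add, AlgHom.commutes, map_smul, evA_K,
      evA_Kbinom hl hodd hq (-2 * n) i k, smul_eq_mul, smul_eq_mul, Algebra.algebraMap_self_apply]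
    have e : q ^ (-(i : ℤ) - 2 * n) * (-q) ^ k
        = (-1 : F) ^ k * q ^ ((-2 * n + (k : ℤ)) - i) := by
      rw [neg_pow q k, ← zpow_natCast q k]
      rw [show q ^ (-(i : ℤ) - 2 * n) * ((-1 : F) ^ k * q ^ (k : ℤ))
          = (-1 : F) ^ k * (q ^ (-(i : ℤ) - 2 * n) * q ^ (k : ℤ)) from by ring]
      rw [← zpow_add₀ hq0]
      congr 2
      ring
    rw [e]
    rw [show (-(-1 : F) ^ k) ^ i = (-1 : F) ^ i * ((-1 : F) ^ k) ^ i from by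
      rw [← neg_one_mul, mul_pow]]
    ring
  rw [Finset.sum_congr rfl hterm]
  have hε : (-1 : F) ^ k = 1 ∨ (-1 : F) ^ k = -1 := by
    rcases Nat.even_or_odd k with he | ho
    · exact Or.inl he.neg_one_pow
    · exact Or.inr ho.neg_one_pow
  rw [scalar_main hl hodd hchar hq ((-1 : F) ^ k) hε (-2 * n + (k : ℤ))]
  have hcond : (q ^ (-2 * n) * (-q) ^ k = 1)
      ↔ ((-1 : F) ^ k = 1 ∧ q ^ (-2 * n + (k : ℤ)) = 1) := by
    rw [show q ^ (-2 * n) * (-q) ^ k = (-1 : F) ^ k * q ^ (-2 * n + (k : ℤ)) from by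
      rw [neg_pow q k, ← zpow_natCast q k,
        show q ^ (-2 * n) * ((-1 : F) ^ k * q ^ (k : ℤ))
          = (-1 : F) ^ k * (q ^ (-2 * n) * q ^ (k : ℤ)) from by ring,
        ← zpow_add₀ hq0]]
    exact cond_iff hl hodd hchar hq k _
  by_cases hc : (-1 : F) ^ k = 1 ∧ q ^ (-2 * n + (k : ℤ)) = 1
  · rw [if_pos (hcond.2 hc), if_pos hc, smul_eq_mul, inv_mul_cancel₀ (two_ne_zero' hchar)]
  · rw [if_neg (fun h => hc (hcond.1 h)), if_neg hc, smul_zero]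
end
end

section
/- For every n ∈ ℤ one has κ̄_n = (1/2) · Σ_{i=0}^{l−1} [K;−2n;i] (q^i − q^{−i−2n} K) in A. -/
open Polynomial

/-- `κ̄_n = (2l)⁻¹ Σ_{i=0}^{2l−1} q^{−2ni} (−K)^i ∈ A`. -/
noncomputable def kappaBar (F : Type*) [Field F] (l : ℕ) (q : F) (n : ℤ) : QA F l :=
  (((2 * l : ℕ) : F))⁻¹ • ∑ i ∈ Finset.range (2 * l), q ^ (-2 * n * (i : ℤ)) • (-KK F l) ^ i

section ScalarLemmas

variable {F : Type*} [Field F]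


/-- numerator product -/
noncomputable def nbF (q : F) (t i : ℕ) : F :=
  ∏ h ∈ Finset.Icc 1 i, (q ^ ((t : ℤ) - h + 1) - q ^ (-((t : ℤ) - h + 1)))

/-- denominator product -/
noncomputable def dbF (q : F) (i : ℕ) : F :=
  ∏ h ∈ Finset.Icc 1 i, (q ^ (h : ℤ) - q ^ (-(h : ℤ)))

/-- balanced q-binomial coefficient -/
noncomputable def cbF (q : F) (t i : ℕ) : F := (dbF q i)⁻¹ * nbF q t i

lemma nbF_zero (q : F) (t : ℕ) : nbF q t 0 = 1 := by simp [nbF]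

lemma dbF_zero (q : F) : dbF q 0 = 1 := by simp [dbF]

lemma cbF_zero (q : F) (t : ℕ) : cbF q t 0 = 1 := by simp [cbF, nbF_zero, dbF_zero]

lemma nbF_succ_top (q : F) (t i : ℕ) :
    nbF q t (i+1) = nbF q t i * (q ^ ((t : ℤ) - i) - q ^ (-((t : ℤ) - i))) := by
  rw [nbF, Finset.prod_Icc_succ_top (by omega : 1 ≤ i + 1)]
  have : ((t : ℤ) - (i+1 : ℕ) + 1) = (t : ℤ) - i := by push_cast; ring
  rw [this, nbF]

lemma dbF_succ (q : F) (i : ℕ) :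
    dbF q (i+1) = dbF q i * (q ^ ((i : ℤ)+1) - q ^ (-((i : ℤ)+1))) := by
  rw [dbF, Finset.prod_Icc_succ_top (by omega : 1 ≤ i + 1)]
  have : ((i+1 : ℕ) : ℤ) = (i : ℤ) + 1 := by push_cast; ring
  rw [this, dbF]

lemma nbF_succ_bot (q : F) (t i : ℕ) :
    nbF q (t+1) (i+1) = (q ^ ((t : ℤ)+1) - q ^ (-((t : ℤ)+1))) * nbF q t i := by
  induction i with
  | zero =>
      simp only [nbF, Finset.Icc_self, Finset.prod_singleton, Finset.prod_empty, mul_one]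
      norm_num
  | succ i ih =>
      rw [nbF_succ_top, ih, nbF_succ_top]
      have : ((t+1 : ℕ) : ℤ) - (i+1 : ℕ) = (t : ℤ) - i := by push_cast; ring
      rw [this]
      ring

lemma cbF_eq_prod (q : F) (t i : ℕ) :
    cbF q t i = ∏ h ∈ Finset.Icc 1 i,
      ((q ^ (h:ℤ) - q ^ (-(h:ℤ)))⁻¹ * (q ^ ((t:ℤ) - h + 1) - q ^ (-((t:ℤ) - h + 1)))) := by
  rw [Finset.prod_mul_distrib, cbF, dbF, nbF, Finset.prod_inv_distrib]

section withQ

variable {l : ℕ} {q : F} (hq0 : q ≠ 0)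
  (hD : ∀ i : ℕ, 1 ≤ i → i ≤ l - 1 → q ^ (i : ℤ) - q ^ (-(i : ℤ)) ≠ 0)

include hD in
lemma dbF_ne_zero {i : ℕ} (hi : i ≤ l - 1) : dbF q i ≠ 0 := by
  rw [dbF]
  refine Finset.prod_ne_zero_iff.2 fun h hh => ?_
  rw [Finset.mem_Icc] at hh
  exact hD h hh.1 (le_trans hh.2 hi)

include hq0 hD in
lemma cbF_pascal {t i : ℕ} (hi : i + 1 ≤ l - 1) :
    cbF q (t+1) (i+1) =
      q ^ (-((i : ℤ)+1)) * cbF q t (i+1) + q ^ ((t : ℤ) - i) * cbF q t i := by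
  have hQi : q ^ ((i : ℤ)+1) - q ^ (-((i : ℤ)+1)) ≠ 0 := by
    have := hD (i+1) (by omega) hi
    have e : ((i+1 : ℕ) : ℤ) = (i : ℤ) + 1 := by push_cast; ring
    rwa [e] at this
  have hdbi : dbF q i ≠ 0 := dbF_ne_zero hD (by omega)
  rw [cbF, cbF, cbF, nbF_succ_bot, nbF_succ_top, dbF_succ]
  have key : (q ^ ((t : ℤ)+1) - q ^ (-((t : ℤ)+1))) =
      q ^ (-((i : ℤ)+1)) * (q ^ ((t : ℤ)-i) - q ^ (-((t : ℤ)-i)))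
        + q ^ ((t : ℤ)-i) * (q ^ ((i : ℤ)+1) - q ^ (-((i : ℤ)+1))) := by
    simp only [mul_sub, sub_mul, ← zpow_add₀ hq0]
    ring_nf
  rw [key, mul_inv]
  have hc : (q ^ ((i:ℤ)+1) - q ^ (-((i:ℤ)+1)))⁻¹ * (q ^ ((i:ℤ)+1) - q ^ (-((i:ℤ)+1))) = 1 :=
    inv_mul_cancel₀ hQi
  linear_combination ((dbF q i)⁻¹ * q ^ ((t:ℤ)-(i:ℤ)) * nbF q t i) * hc

lemma cbF_eq_zero {t i : ℕ} (hti : t + 1 ≤ i) : cbF q t i = 0 := by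
  rw [cbF, nbF]
  rw [Finset.prod_eq_zero (Finset.mem_Icc.2 ⟨by omega, hti⟩ : t + 1 ∈ Finset.Icc 1 i)]
  · ring
  · have : ((t : ℤ) - ((t:ℕ)+1 : ℕ) + 1) = 0 := by push_cast; ring
    rw [this]
    norm_num

include hq0 hD in
lemma qbinom (t : ℕ) (ht : t ≤ l - 1) :
    ∀ z : F, ∑ i ∈ Finset.range (t+1), cbF q t i * z ^ i
      = ∏ h ∈ Finset.range t, (1 + z * q ^ ((t : ℤ) - 1 - 2*h)) := by
  induction t with
  | zero => intro z; simp [cbF_zero]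
  | succ t ih =>
      intro z
      have ih' := ih (by omega) (z * q⁻¹)
      have step : ∀ i ∈ Finset.range (t+1),
          cbF q (t+1) (i+1) * z ^ (i+1)
            = cbF q t (i+1) * (z*q⁻¹) ^ (i+1)
              + (z * q ^ (t : ℤ)) * (cbF q t i * (z*q⁻¹) ^ i) := by
        intro i hi
        rw [Finset.mem_range] at hi
        rw [cbF_pascal hq0 hD (by omega)]
        have e1 : (z*q⁻¹) ^ (i+1) = z^(i+1) * q ^ (-((i:ℤ)+1)) := by
          rw [mul_pow]
          congr 1
          rw [← zpow_natCast q⁻¹, inv_zpow, ← zpow_neg]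
          try congr 1
          all_goals (push_cast; ring)
        have e2 : (z*q⁻¹) ^ i = z^i * q ^ (-(i:ℤ)) := by
          rw [mul_pow]
          congr 1
          rw [← zpow_natCast q⁻¹, inv_zpow, ← zpow_neg]
        have e4 : (q ^ ((t:ℤ) - i)) = q ^ (t:ℤ) * q ^ (-(i:ℤ)) := by
          rw [← zpow_add₀ hq0]
          congr 1
          try ring
        rw [e1, e2, e4]
        ring
      rw [Finset.sum_range_succ' (fun i => cbF q (t+1) i * z ^ i)]
      rw [Finset.sum_congr rfl step, Finset.sum_add_distrib, ← Finset.mul_sum]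
      rw [ih']
      have exp2 : (∑ i ∈ Finset.range (t+1), cbF q t (i+1) * (z*q⁻¹) ^ (i+1))
            + cbF q (t+1) 0 * z ^ 0
          = ∑ i ∈ Finset.range (t+1), cbF q t i * (z*q⁻¹) ^ i := by
        rw [cbF_zero]
        have : (∑ i ∈ Finset.range (t+1), cbF q t (i+1) * (z*q⁻¹) ^ (i+1)) + 1
            = ∑ i ∈ Finset.range (t+2), cbF q t i * (z*q⁻¹) ^ i := by
          rw [Finset.sum_range_succ' (fun i => cbF q t i * (z*q⁻¹) ^ i)]
          simp [cbF_zero]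
        rw [pow_zero, mul_one, this, Finset.sum_range_succ,
          cbF_eq_zero (le_refl (t+1))]
        simp
      rw [add_assoc, add_comm (z * q ^ (t:ℤ) * _), ← add_assoc, exp2, ih']
      have hexp : ∀ h : ℕ, h ∈ Finset.range (t+1) →
          (1 : F) + z * q ^ ((((t+1:ℕ)) : ℤ) - 1 - 2*(h:ℤ)) = 1 + z * q ^ ((t:ℤ) - 2*(h:ℤ)) := by
        intro h _
        congr 2
        push_cast; ring
      rw [Finset.prod_congr rfl hexp]
      rw [Finset.prod_range_succ' (fun h => 1 + z * q ^ ((t:ℤ) - 2*(h:ℤ)))]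
      have ff : ∀ h : ℕ, h ∈ Finset.range t →
          (1 : F) + z * q ^ ((t:ℤ) - 2*((h:ℕ)+1:ℕ)) = 1 + (z*q⁻¹) * q ^ ((t:ℤ) - 1 - 2*(h:ℤ)) := by
        intro h _
        congr 1
        rw [mul_assoc]
        congr 1
        rw [← zpow_neg_one q, ← zpow_add₀ hq0]
        congr 1
        push_cast; ring
      rw [Finset.prod_congr rfl ff]
      norm_num
      try ring

include hq0 in
lemma qmul {a b : ℤ} (h : 1 + a = b) : q * q ^ a = q ^ b := by
  rw [← h, zpow_add₀ hq0, zpow_one]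

include hq0 in
lemma qinvmul {a b : ℤ} (h : a - 1 = b) : q⁻¹ * q ^ a = q ^ b := by
  rw [← h, zpow_sub₀ hq0, zpow_one, div_eq_inv_mul]

include hq0 hD in
lemma scalar_main {t : ℕ} (htl : t < l) (hl0 : 0 < l) {ε : F} (hε : ε = 1 ∨ ε = -1) :
    ∑ i ∈ Finset.range l, ε ^ i * cbF q t i * (q ^ (i : ℤ) - ε * q ^ ((t : ℤ) - i))
      = if t = 0 then 1 - ε else 0 := by
  have hε2 : ε * ε = 1 := by rcases hε with h | h <;> rw [h] <;> ring
  have hεq0 : ε ≠ 0 := by rcases hε with h | h <;> rw [h] <;> norm_num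
  -- truncate the sum to range (t+1)
  have htrunc : ∑ i ∈ Finset.range l, ε ^ i * cbF q t i * (q ^ (i : ℤ) - ε * q ^ ((t : ℤ) - i))
      = ∑ i ∈ Finset.range (t+1), ε ^ i * cbF q t i * (q ^ (i : ℤ) - ε * q ^ ((t : ℤ) - i)) := by
    symm
    refine Finset.sum_subset ?_ ?_
    · exact Finset.range_subset_range.2 (by omega)
    · intro i _ hi
      rw [Finset.mem_range, not_lt] at hi
      rw [cbF_eq_zero (by omega)]
      ring
  rw [htrunc]
  -- split into two sums
  have hsplit : ∀ i ∈ Finset.range (t+1),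
      ε ^ i * cbF q t i * (q ^ (i : ℤ) - ε * q ^ ((t : ℤ) - i))
        = cbF q t i * (ε * q) ^ i - (ε * q ^ (t:ℤ)) * (cbF q t i * (ε * q⁻¹) ^ i) := by
    intro i _
    have e1 : (ε * q) ^ i = ε ^ i * q ^ (i : ℤ) := by
      rw [mul_pow, zpow_natCast]
    have e2 : (ε * q⁻¹) ^ i = ε ^ i * q ^ (-(i:ℤ)) := by
      rw [mul_pow]
      congr 1
      rw [← zpow_natCast q⁻¹, inv_zpow, ← zpow_neg]
    have e3 : q ^ ((t:ℤ) - i) = q ^ (t:ℤ) * q ^ (-(i:ℤ)) := by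
      rw [← zpow_add₀ hq0]
      try congr 1
      all_goals ring
    rw [e1, e2, e3]
    ring
  rw [Finset.sum_congr rfl hsplit, Finset.sum_sub_distrib, ← Finset.mul_sum]
  have ht' : t ≤ l - 1 := by omega
  rw [qbinom hq0 hD t ht' (ε * q), qbinom hq0 hD t ht' (ε * q⁻¹)]
  -- now a product computation
  rcases Nat.eq_zero_or_pos t with ht0 | htpos
  · subst ht0
    simp only [Finset.range_zero, Finset.prod_empty, mul_one, Nat.cast_zero, if_pos rfl]
    simp [cbF_zero]
  · rw [if_neg (by omega)]
    obtain ⟨s, rfl⟩ : ∃ s, t = s + 1 := ⟨t - 1, by omega⟩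
    -- first product: peel bottom factor h = 0
    rw [Finset.prod_range_succ' (fun h => 1 + (ε*q) * q ^ (((s+1:ℕ):ℤ) - 1 - 2*(h:ℤ)))]
    rw [Finset.prod_range_succ (fun h => 1 + (ε*q⁻¹) * q ^ (((s+1:ℕ):ℤ) - 1 - 2*(h:ℤ)))]
    have hmatch : ∀ h : ℕ, h ∈ Finset.range s →
        (1:F) + (ε*q) * q ^ (((s+1:ℕ):ℤ) - 1 - 2*((h:ℕ)+1:ℕ)) =
        1 + (ε*q⁻¹) * q ^ (((s+1:ℕ):ℤ) - 1 - 2*(h:ℤ)) := by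
      intro h _
      congr 1
      rw [mul_assoc, mul_assoc, qmul hq0 rfl, qinvmul hq0 rfl]
      congr 1
      push_cast
      ring
    rw [Finset.prod_congr rfl hmatch]
    -- remaining factors
    have hf0 : (1:F) + (ε*q) * q ^ (((s+1:ℕ):ℤ) - 1 - 2*((0:ℕ):ℤ)) = 1 + ε * q ^ ((s:ℤ)+1) := by
      rw [mul_assoc, qmul hq0 rfl]
      congr 2
      push_cast
      ring
    have hftop : (1:F) + (ε*q⁻¹) * q ^ (((s+1:ℕ):ℤ) - 1 - 2*((s:ℕ):ℤ)) = 1 + ε * q ^ (-((s:ℤ)+1)) := by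
      rw [mul_assoc, qinvmul hq0 rfl]
      congr 2
      push_cast
      ring
    rw [hf0, hftop]
    -- final algebra:  C * (1 + ε q^{s+1}) - ε q^{s+1} (C * (1 + ε q^{-(s+1)})) = 0
    have hqq : q ^ ((s:ℤ)+1) * q ^ (-((s:ℤ)+1)) = 1 := by
      rw [zpow_neg]
      exact mul_inv_cancel₀ (zpow_ne_zero _ hq0)
    have hcast : ((s+1:ℕ):ℤ) = (s:ℤ)+1 := by push_cast; ring
    rw [hcast]
    linear_combination (-(∏ h ∈ Finset.range s, (1 + ε*q⁻¹ * q ^ ((s:ℤ)+1 - 1 - 2*(h:ℤ))))) * hε2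
      + (-(ε * ε * (∏ h ∈ Finset.range s, (1 + ε*q⁻¹ * q ^ ((s:ℤ)+1 - 1 - 2*(h:ℤ)))))) * hqq

end withQ


end ScalarLemmas

section QALemmas

variable {F : Type*} [Field F] {l : ℕ}

/-- Evaluation of `QA F l` at a `2l`-th root of unity. -/
noncomputable def evQA (l : ℕ) (ζ : F) (hζ : ζ ^ (2 * l) = 1) : QA F l →ₐ[F] F :=
  Ideal.Quotient.liftₐ _ (aeval ζ) (by
    intro a ha
    rw [Ideal.mem_span_singleton] at ha
    obtain ⟨b, rfl⟩ := ha
    rw [map_mul, map_sub, map_pow, map_one, aeval_X, hζ, sub_self, zero_mul])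

lemma evQA_mk (ζ : F) (hζ : ζ ^ (2 * l) = 1) (P : Polynomial F) :
    evQA l ζ hζ (Ideal.Quotient.mk _ P) = P.eval ζ := by
  show evQA l ζ hζ (Ideal.Quotient.mk _ P) = _
  show (aeval ζ) P = eval ζ P
  simp

lemma evQA_KK (ζ : F) (hζ : ζ ^ (2 * l) = 1) : evQA l ζ hζ (KK F l) = ζ := by
  rw [KK, evQA_mk]; simp

lemma evQA_KKinv (ζ : F) (hζ : ζ ^ (2 * l) = 1) :
    evQA l ζ hζ (KKinv F l) = ζ ^ (2 * l - 1) := by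
  rw [KKinv, map_pow, evQA_KK]

lemma evQA_injective (hl : 0 < l) {μ : F} (hμ : IsPrimitiveRoot μ (2 * l))
    {x y : QA F l}
    (h : ∀ ζ : F, ∀ hζ : ζ ^ (2 * l) = 1, evQA l ζ hζ x = evQA l ζ hζ y) : x = y := by
  obtain ⟨P, rfl⟩ := Ideal.Quotient.mk_surjective x
  obtain ⟨Q, rfl⟩ := Ideal.Quotient.mk_surjective y
  rw [Ideal.Quotient.eq, Ideal.mem_span_singleton]
  have h2l : 0 < 2 * l := by omega
  have hprod := X_pow_sub_one_eq_prod h2l hμ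
  rw [hprod]
  refine Finset.prod_dvd_of_coprime ?_ ?_
  · intro a ha b hb hab
    exact Polynomial.pairwise_coprime_X_sub_C (Function.injective_id) hab
  · intro ζ hζmem
    have hζ : ζ ^ (2 * l) = 1 := (Polynomial.mem_nthRootsFinset h2l 1).1 hζmem
    have := h ζ hζ
    rw [evQA_mk, evQA_mk] at this
    rw [dvd_iff_isRoot]
    simp [IsRoot, this]


end QALemmas

theorem stmt7 (l : ℕ) (hl : 1 < l) (hodd : Odd l)
    (F : Type*) [Field F] (hchar : ((2 * l : ℕ) : F) ≠ 0)
    (q : F) (hq : IsPrimitiveRoot q l) (n : ℤ) :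
    kappaBar F l q n =
      (2 : F)⁻¹ • ∑ i ∈ Finset.range l,
        Kbinom F l q (-2 * n) i *
          (algebraMap F (QA F l) (q ^ (i : ℤ)) - q ^ (-(i : ℤ) - 2 * n) • KK F l) := by
  have hl0 : 0 < l := by omega
  have h2l0 : 0 < 2 * l := by omega
  have hcast : ((2 * l : ℕ) : F) = 2 * (l : F) := by push_cast; ring
  have h2 : (2 : F) ≠ 0 := fun h => hchar (by rw [hcast, h, zero_mul])
  have hlF : (l : F) ≠ 0 := fun h => hchar (by rw [hcast, h, mul_zero])
  have hq0 : q ≠ 0 := hq.ne_zero (by omega)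
  have hne11 : (-1 : F) ≠ 1 := by
    intro h
    apply h2
    linear_combination -h
  have hql : q ^ l = 1 := hq.pow_eq_one
  have hqlz : q ^ (l : ℤ) = 1 := by rw [zpow_natCast, hql]
  -- q^a only depends on a mod l
  have zq : ∀ a b : ℤ, a % (l : ℤ) = b % (l : ℤ) → q ^ a = q ^ b := by
    have key : ∀ a : ℤ, q ^ a = q ^ (a % (l : ℤ)) := by
      intro a
      conv_lhs => rw [← Int.mul_ediv_add_emod a (l : ℤ)]
      rw [zpow_add₀ hq0, zpow_mul, hqlz, one_zpow, one_mul]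
    intro a b hab
    rw [key a, key b, hab]
  -- the nonvanishing of the Gaussian denominators
  have hD : ∀ i : ℕ, 1 ≤ i → i ≤ l - 1 → q ^ (i : ℤ) - q ^ (-(i : ℤ)) ≠ 0 := by
    intro i h1 h2' heq
    have h3 : q ^ (i : ℤ) = q ^ (-(i : ℤ)) := by linear_combination heq
    have h4 : q ^ (2 * i) = 1 := by
      have := congrArg (· * q ^ (i : ℤ)) h3
      simp only [← zpow_add₀ hq0] at this
      have e1 : (i : ℤ) + (i : ℤ) = ((2 * i : ℕ) : ℤ) := by push_cast; ring
      have e2 : (-(i : ℤ)) + (i : ℤ) = 0 := by ring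
      rw [e1, e2, zpow_natCast, zpow_zero] at this
      exact this
    have h5 : l ∣ 2 * i := hq.dvd_of_pow_eq_one _ h4
    have h6 : l ∣ i := (Nat.Coprime.dvd_of_dvd_mul_left (Nat.coprime_two_right.2 hodd) h5)
    have := Nat.le_of_dvd (by omega) h6
    omega
  -- -q is a primitive 2l-th root of unity
  have hμpow : (-q) ^ (2 * l) = 1 := by
    rw [neg_pow, Even.neg_one_pow (even_two_mul l), one_mul, mul_comm 2 l, pow_mul, hql,
      one_pow]
  have hμ : IsPrimitiveRoot (-q) (2 * l) := by
    constructor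
    · exact hμpow
    · intro m hm
      have hq2m : q ^ (2 * m) = 1 := by
        have h1 : ((-q) ^ m) ^ 2 = 1 := by rw [hm]; norm_num
        rw [← pow_mul, mul_comm m 2] at h1
        rwa [pow_mul, neg_sq, ← pow_mul] at h1
      have h5 : l ∣ 2 * m := hq.dvd_of_pow_eq_one _ hq2m
      have h6 : l ∣ m := Nat.Coprime.dvd_of_dvd_mul_left (Nat.coprime_two_right.2 hodd) h5
      obtain ⟨k, rfl⟩ := h6
      have hk : ((-1 : F)) ^ k = 1 := by
        calc ((-1:F))^k = ((-q)^l)^k := by rw [Odd.neg_pow hodd, hql]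
          _ = (-q)^(l*k) := by rw [← pow_mul]
          _ = 1 := hm
      have hkeven : Even k := by
        rcases Nat.even_or_odd k with h | h
        · exact h
        · rw [Odd.neg_one_pow h] at hk
          exact absurd hk hne11
      obtain ⟨k', rfl⟩ := hkeven
      exact ⟨k', by ring⟩
  -- now prove the identity via evaluations
  have : NeZero (2 * l) := ⟨by omega⟩
  refine evQA_injective hl0 hμ ?_
  intro ζ hζ
  obtain ⟨j, hjlt, hjζ⟩ := hμ.eq_pow_of_pow_eq_one (k := 2 * l) hζ
  set c : ℤ := -2 * n with hc
  set ε : F := (-1 : F) ^ j with hε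
  have hεpm : ε = 1 ∨ ε = -1 := by
    rcases Nat.even_or_odd j with h | h
    · left; rw [hε, Even.neg_one_pow h]
    · right; rw [hε, Odd.neg_one_pow h]
  have hε2 : ε * ε = 1 := by rcases hεpm with h | h <;> rw [h] <;> ring
  have hζj : ζ = ε * q ^ ((j : ℤ)) := by
    rw [← hjζ, neg_pow, hε, zpow_natCast]
  have hζ0 : ζ ≠ 0 := by
    rw [hζj]
    apply mul_ne_zero _ (zpow_ne_zero _ hq0)
    rcases hεpm with h | h <;> rw [h] <;> norm_num
  have hζinv : ζ ^ (2 * l - 1) = ε * q ^ (-(j : ℤ)) := by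
    have h1 : ζ ^ (2 * l - 1) * ζ = 1 := by
      rw [← pow_succ]
      have : 2 * l - 1 + 1 = 2 * l := by omega
      rw [this, hζ]
    have h2' : (ε * q ^ (-(j : ℤ))) * ζ = 1 := by
      rw [hζj]
      rw [show (ε * q ^ (-(j:ℤ))) * (ε * q ^ ((j:ℤ))) = (ε * ε) * (q ^ (-(j:ℤ)) * q ^ ((j:ℤ))) from by ring]
      rw [hε2, ← zpow_add₀ hq0]
      norm_num
    have := mul_right_cancel₀ hζ0 (h1.trans h2'.symm)
    exact this
  -- define t
  set t : ℕ := (((j : ℤ) + c) % (l : ℤ)).toNat with htdef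
  have hlz : (0 : ℤ) < (l : ℤ) := by exact_mod_cast hl0
  have htz : (t : ℤ) = ((j : ℤ) + c) % (l : ℤ) :=
    Int.toNat_of_nonneg (Int.emod_nonneg _ (by omega))
  have htlt : t < l := by
    have := Int.emod_lt_of_pos ((j : ℤ) + c) hlz
    omega
  have hmodeq : ((j : ℤ) + c) % (l : ℤ) = (t : ℤ) % (l : ℤ) := by
    rw [htz]
    exact (Int.emod_emod_of_dvd _ dvd_rfl).symm
  have hcong : ∀ a : ℤ, q ^ ((j : ℤ) + c + a) = q ^ ((t : ℤ) + a) := by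
    intro a
    exact zq _ _ (Int.ModEq.add_right a hmodeq)
  have hcongneg : ∀ a : ℤ, q ^ (-((j : ℤ) + c) + a) = q ^ (-(t : ℤ) + a) := by
    intro a
    exact zq _ _ (Int.ModEq.add_right a (Int.ModEq.neg hmodeq))
  -- evaluate the left-hand side
  have hevL : evQA l ζ hζ (kappaBar F l q n)
      = ((2 * l : ℕ) : F)⁻¹ * ∑ i ∈ Finset.range (2 * l), (q ^ c * (-ζ)) ^ i := by
    rw [kappaBar, map_smul, map_sum, smul_eq_mul]
    congr 1
    refine Finset.sum_congr rfl fun i _ => ?_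
    rw [map_smul, map_pow, map_neg, evQA_KK, smul_eq_mul, mul_pow,
      ← zpow_natCast (q ^ c), ← zpow_mul]
    try congr 2
    try rw [hc]
    try ring
  -- evaluate the right-hand side
  have hevR : evQA l ζ hζ ((2 : F)⁻¹ • ∑ i ∈ Finset.range l,
        Kbinom F l q (-2 * n) i *
          (algebraMap F (QA F l) (q ^ (i : ℤ)) - q ^ (-(i : ℤ) - 2 * n) • KK F l))
      = 2⁻¹ * ∑ i ∈ Finset.range l,
          ε ^ i * cbF q t i * (q ^ (i : ℤ) - ε * q ^ ((t : ℤ) - i)) := by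
    rw [map_smul, map_sum, smul_eq_mul]
    congr 1
    refine Finset.sum_congr rfl fun i hi => ?_
    rw [map_mul, map_sub, AlgHom.commutes, map_smul, evQA_KK, smul_eq_mul]
    have hKb : evQA l ζ hζ (Kbinom F l q (-2 * n) i) = ε ^ i * cbF q t i := by
      rw [Kbinom, map_prod]
      have hfac : ∀ h ∈ Finset.Icc 1 i,
          evQA l ζ hζ ((q ^ ((h : ℕ) : ℤ) - q ^ (-((h : ℕ) : ℤ)))⁻¹ •
            (q ^ (-2 * n - h + 1) • KK F l - q ^ (-(-2 * n - h + 1)) • KKinv F l))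
          = ε * ((q ^ ((h : ℕ) : ℤ) - q ^ (-((h : ℕ) : ℤ)))⁻¹ *
              (q ^ ((t : ℤ) - h + 1) - q ^ (-((t : ℤ) - h + 1)))) := by
        intro h _
        rw [map_smul, map_sub, map_smul, map_smul, evQA_KK, evQA_KKinv, hζinv,
          smul_eq_mul, smul_eq_mul, smul_eq_mul]
        have e1 : q ^ (-2 * n - (h : ℤ) + 1) * ζ = ε * q ^ ((t : ℤ) - h + 1) := by
          rw [hζj, show q ^ (-2 * n - (h : ℤ) + 1) * (ε * q ^ ((j : ℤ)))
              = ε * (q ^ (-2 * n - (h : ℤ) + 1) * q ^ ((j : ℤ))) from by ring,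
            ← zpow_add₀ hq0,
            show -2 * n - (h : ℤ) + 1 + (j : ℤ) = (j : ℤ) + c + (1 - h) from by rw [hc]; ring,
            hcong (1 - (h : ℤ))]
          congr 2
          ring
        have e2 : q ^ (-(-2 * n - (h : ℤ) + 1)) * (ε * q ^ (-(j : ℤ)))
            = ε * q ^ (-((t : ℤ) - h + 1)) := by
          rw [show q ^ (-(-2 * n - (h : ℤ) + 1)) * (ε * q ^ (-(j : ℤ)))
              = ε * (q ^ (-(-2 * n - (h : ℤ) + 1)) * q ^ (-(j : ℤ))) from by ring,
            ← zpow_add₀ hq0,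
            show -(-2 * n - (h : ℤ) + 1) + -(j : ℤ) = -((j : ℤ) + c) + ((h : ℤ) - 1) from by
              rw [hc]; ring,
            hcongneg ((h : ℤ) - 1)]
          congr 2
          ring
        rw [e1, e2]
        ring
      rw [Finset.prod_congr rfl hfac, Finset.prod_mul_distrib, Finset.prod_const,
        Nat.card_Icc, cbF_eq_prod]
      norm_num
    rw [hKb]
    congr 1
    have e3 : q ^ (-(i : ℤ) - 2 * n) * ζ = ε * q ^ ((t : ℤ) - i) := by
      rw [hζj, show q ^ (-(i : ℤ) - 2 * n) * (ε * q ^ ((j : ℤ)))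
          = ε * (q ^ (-(i : ℤ) - 2 * n) * q ^ ((j : ℤ))) from by ring,
        ← zpow_add₀ hq0,
        show -(i : ℤ) - 2 * n + (j : ℤ) = (j : ℤ) + c + (-(i : ℤ)) from by rw [hc]; ring,
        hcong (-(i : ℤ))]
      try congr 2
      try ring
    rw [e3, Algebra.algebraMap_self, RingHom.id_apply]
  rw [hevL, hevR, scalar_main hq0 hD htlt hl0 hεpm]
  -- pin down the value of r := q ^ c * (-ζ)
  have hrval : q ^ c * (-ζ) = -ε * q ^ t := by
    rw [hζj, show q ^ c * -(ε * q ^ ((j : ℤ))) = -ε * (q ^ c * q ^ ((j : ℤ))) from by ring,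
      ← zpow_add₀ hq0, show c + (j : ℤ) = (j : ℤ) + c + 0 from by ring, hcong 0, add_zero,
      zpow_natCast]
  have hqt_one : q ^ t = 1 → t = 0 := by
    intro h
    by_contra ht0
    have := Nat.le_of_dvd (by omega) (hq.dvd_of_pow_eq_one t h)
    omega
  have hqt_negone : q ^ t = -1 → False := by
    intro h
    have h1 : q ^ (2 * t) = 1 := by
      rw [mul_comm 2 t, pow_mul, h]
      norm_num
    have h5 : l ∣ 2 * t := hq.dvd_of_pow_eq_one _ h1
    have h6 : l ∣ t := Nat.Coprime.dvd_of_dvd_mul_left (Nat.coprime_two_right.2 hodd) h5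
    have ht0 : t = 0 := by
      rcases Nat.eq_zero_or_pos t with h' | h'
      · exact h'
      · have := Nat.le_of_dvd h' h6; omega
    rw [ht0, pow_zero] at h
    exact hne11 h.symm
  have hgeom0 : q ^ c * (-ζ) ≠ 1 →
      ∑ i ∈ Finset.range (2 * l), (q ^ c * (-ζ)) ^ i = 0 := by
    intro hne
    have hgs := geom_sum_mul (q ^ c * (-ζ)) (2 * l)
    have hpow : (q ^ c * (-ζ)) ^ (2 * l) = 1 := by
      rw [mul_pow]
      have hA : ((q : F) ^ c) ^ (2 * l) = 1 := by
        rw [← zpow_natCast (q ^ c), ← zpow_mul]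
        have he : q ^ (c * ((2 * l : ℕ) : ℤ)) = q ^ (0 : ℤ) := by
          apply zq
          have e : c * ((2 * l : ℕ) : ℤ) = (2 * c) * (l : ℤ) := by push_cast; ring
          rw [e, Int.mul_emod_left, Int.zero_emod]
        rw [he, zpow_zero]
      have hB : (-ζ) ^ (2 * l) = 1 := by
        rw [neg_pow, Even.neg_one_pow (even_two_mul l), one_mul, hζ]
      rw [hA, hB, one_mul]
    rw [hpow, sub_self] at hgs
    rcases mul_eq_zero.1 hgs with h | h
    · exact h
    · exact absurd (sub_eq_zero.1 h) hne
  rcases hεpm with hεv | hεv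
  · -- ε = 1 : both sides are 0
    have hrne : q ^ c * (-ζ) ≠ 1 := by
      rw [hrval, hεv]
      intro hcontra
      exact hqt_negone (by linear_combination -hcontra)
    rw [hgeom0 hrne, mul_zero]
    rw [hεv]
    split_ifs <;> norm_num
  · -- ε = -1
    by_cases ht0 : t = 0
    · have hr1 : q ^ c * (-ζ) = 1 := by
        rw [hrval, hεv, ht0, pow_zero]
        ring
      rw [hr1]
      simp only [one_pow, Finset.sum_const, Finset.card_range, nsmul_eq_mul, mul_one]
      rw [if_pos ht0, hεv, inv_mul_cancel₀ hchar,
        show (1 : F) - -1 = 2 from by norm_num, inv_mul_cancel₀ h2]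
    · have hrne : q ^ c * (-ζ) ≠ 1 := by
        rw [hrval, hεv]
        intro hcontra
        exact ht0 (hqt_one (by linear_combination hcontra))
      rw [hgeom0 hrne, mul_zero, if_neg ht0, mul_zero]
end

section
/- For every 0 ≤ n < p one has C(X, n) = Σ_{i=n}^{p−1} binom(i, n) · μ_i in R, where binom(i,n) denotes the ordinary binomial coefficient reduced modulo p. -/
open Polynomial Finset

/-- `C(X−a, i) = (i!)⁻¹ ∏_{j=0}^{i−1} (X − a − j) ∈ (ℤ/pℤ)[X]`. -/
noncomputable def Cpoly (p : ℕ) (a : ZMod p) (i : ℕ) : Polynomial (ZMod p) :=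
  ((i.factorial : ZMod p))⁻¹ • ∏ j ∈ Finset.range i, (X - C (a + (j : ZMod p)))

/-- `R = (ℤ/pℤ)[X]/(X^p − X)`, a model of the distribution algebra `Dist(T₁)` for `SL₂`. -/
abbrev Rp (p : ℕ) : Type _ :=
  Polynomial (ZMod p) ⧸ Ideal.span {(X : Polynomial (ZMod p)) ^ p - X}

/-- `μ_n ∈ R`, the image of `Σ_{i=0}^{p−1} (−1)^i C(X − n, i)`. -/
noncomputable def mu (p : ℕ) (n : ℕ) : Rp p :=
  Ideal.Quotient.mk (Ideal.span {(X : Polynomial (ZMod p)) ^ p - X})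
    (∑ i ∈ Finset.range p, (-1 : ZMod p) ^ i • Cpoly p (n : ZMod p) i)

section aux
variable {p : ℕ} [Fact p.Prime]

lemma eval_Cpoly (a x : ZMod p) (i : ℕ) :
    (Cpoly p a i).eval x = ((x - a).val.choose i : ZMod p) := by
  have hp : p.Prime := Fact.out
  have hm : (x - a).val < p := ZMod.val_lt _
  set m := (x - a).val with hmdef
  have hcast : ((m : ZMod p)) = x - a := ZMod.natCast_zmod_val _
  have heval : (Cpoly p a i).eval x
      = ((i.factorial : ZMod p))⁻¹ * ∏ j ∈ range i, ((m : ZMod p) - j) := by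
    simp only [Cpoly, eval_smul, eval_prod, eval_sub, eval_X, eval_C, smul_eq_mul, hcast]
    exact congrArg _ (Finset.prod_congr rfl fun j _ => by ring)
  rcases le_or_gt i m with h | h
  · have hfac : (∏ j ∈ range i, ((m : ZMod p) - j)) = ((m.descFactorial i : ℕ) : ZMod p) := by
      rw [Nat.descFactorial_eq_prod_range, Nat.cast_prod]
      refine Finset.prod_congr rfl fun j hj => ?_
      rw [Nat.cast_sub (le_of_lt (lt_of_lt_of_le (mem_range.mp hj) h))]
    have hne : ((i.factorial : ZMod p)) ≠ 0 := by
      rw [Ne, ZMod.natCast_eq_zero_iff]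
      exact fun hdvd => absurd (hp.dvd_factorial.mp hdvd) (by omega)
    rw [heval, hfac, Nat.descFactorial_eq_factorial_mul_choose, Nat.cast_mul]
    field_simp
  · have hzero : (∏ j ∈ range i, ((m : ZMod p) - j)) = 0 :=
      Finset.prod_eq_zero (mem_range.mpr h) (by simp)
    rw [heval, hzero, mul_zero, Nat.choose_eq_zero_of_lt h, Nat.cast_zero]

lemma alt_sum (m : ℕ) (hm : m < p) :
    ∑ j ∈ range p, (-1 : ZMod p) ^ j * (m.choose j : ZMod p)
      = if m = 0 then 1 else 0 := by
  have hsub : range (m + 1) ⊆ range p := by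
    intro j hj; simp only [mem_range] at *; omega
  rw [← Finset.sum_subset hsub (fun j _ hj => by
    rw [Nat.choose_eq_zero_of_lt (Nat.lt_of_succ_le
      (by simp only [mem_range, not_lt] at hj; omega : m + 1 ≤ j)), Nat.cast_zero, mul_zero])]
  have := Int.alternating_sum_range_choose (n := m)
  calc ∑ j ∈ range (m + 1), (-1 : ZMod p) ^ j * (m.choose j : ZMod p)
      = ((∑ j ∈ range (m + 1), (-1 : ℤ) ^ j * (m.choose j : ℤ) : ℤ) : ZMod p) := by
        push_cast
        rfl
    _ = _ := by rw [this]; split <;> simp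

lemma natDegree_Cpoly_le (a : ZMod p) (i : ℕ) : (Cpoly p a i).natDegree ≤ i := by
  have h2 : ∑ j ∈ range i, (X - C (a + (j : ZMod p))).natDegree ≤ i := by
    apply le_trans (Finset.sum_le_sum (g := fun _ => 1) fun j _ =>
      (natDegree_X_sub_C _).le)
    simp
  exact le_trans (natDegree_smul_le _ _) (le_trans (natDegree_prod_le _ _) h2)

set_option maxHeartbeats 1000000 in
lemma poly_eq (n : ℕ) (hn : n < p) :
    Cpoly p 0 n = ∑ i ∈ Finset.Icc n (p - 1), (i.choose n : ZMod p) •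
      ∑ j ∈ Finset.range p, (-1 : ZMod p) ^ j • Cpoly p (i : ZMod p) j := by
  have hp : p.Prime := Fact.out
  rw [← sub_eq_zero]
  apply Polynomial.eq_zero_of_natDegree_lt_card_of_eval_eq_zero' _ Finset.univ
  · intro x _
    have hxv : x.val < p := ZMod.val_lt x
    rw [eval_sub, eval_finset_sum]
    have hLHS : (Cpoly p 0 n).eval x = (x.val.choose n : ZMod p) := by
      rw [eval_Cpoly]; simp
    have hterm : ∀ i ∈ Finset.Icc n (p - 1),
        ((i.choose n : ZMod p) • ∑ j ∈ Finset.range p,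
          (-1 : ZMod p) ^ j • Cpoly p (i : ZMod p) j).eval x
        = if i = x.val then (i.choose n : ZMod p) else 0 := by
      intro i hi
      have hip : i < p := by
        have := (Finset.mem_Icc.mp hi).2; omega
      rw [eval_smul, eval_finset_sum]
      have : ∀ j ∈ range p, ((-1 : ZMod p) ^ j • Cpoly p (i : ZMod p) j).eval x
          = (-1 : ZMod p) ^ j * (((x - i).val).choose j : ZMod p) := by
        intro j _; rw [eval_smul, eval_Cpoly]; rfl
      rw [Finset.sum_congr rfl this, alt_sum _ (ZMod.val_lt _)]
      have hiff : (x - (i : ZMod p)).val = 0 ↔ i = x.val := by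
        rw [ZMod.val_eq_zero, sub_eq_zero]
        constructor
        · intro h; rw [h, ZMod.val_cast_of_lt hip]
        · intro h; rw [h, ZMod.natCast_zmod_val]
      by_cases hc : i = x.val <;> simp [hiff, hc, smul_eq_mul]
    rw [Finset.sum_congr rfl hterm, Finset.sum_ite_eq' (Finset.Icc n (p-1)) x.val
      (fun i => (i.choose n : ZMod p)), hLHS]
    by_cases hcase : n ≤ x.val
    · rw [if_pos (Finset.mem_Icc.mpr ⟨hcase, by omega⟩), sub_self]
    · rw [if_neg (fun hmem => hcase (Finset.mem_Icc.mp hmem).1),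
        Nat.choose_eq_zero_of_lt (by omega), Nat.cast_zero, sub_zero]
  · rw [Finset.card_univ, ZMod.card]
    refine lt_of_le_of_lt (natDegree_sub_le _ _) ?_
    rw [max_lt_iff]
    constructor
    · exact lt_of_le_of_lt (natDegree_Cpoly_le _ _) hn
    · refine lt_of_le_of_lt (natDegree_sum_le_of_forall_le _ _ fun i _ => ?_) (by
        have := hp.two_le; omega : p - 1 < p)
      refine (natDegree_smul_le _ _).trans ?_
      refine natDegree_sum_le_of_forall_le _ _ fun j hj => ?_
      have h3 : (Cpoly p (i : ZMod p) j).natDegree ≤ j := natDegree_Cpoly_le _ _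
      have h4 : j ≤ p - 1 := by
        have h5 := Finset.mem_range.mp hj
        omega
      exact le_trans ((natDegree_smul_le _ _).trans h3) h4

end aux

theorem stmt14 (p : ℕ) (hp : p.Prime) (hodd : Odd p) (n : ℕ) (hn : n < p) :
    Ideal.Quotient.mk (Ideal.span {(X : Polynomial (ZMod p)) ^ p - X}) (Cpoly p 0 n) =
      ∑ i ∈ Finset.Icc n (p - 1), ((i.choose n : ZMod p)) • mu p i := by
  haveI : Fact p.Prime := ⟨hp⟩
  set I := Ideal.span {(X : Polynomial (ZMod p)) ^ p - X} with hI
  have hsm : ∀ (c : ZMod p) (f : Polynomial (ZMod p)),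
      Ideal.Quotient.mk I (c • f) = c • Ideal.Quotient.mk I f := fun c f =>
    map_smul (Ideal.Quotient.mkₐ (ZMod p) I) c f
  rw [poly_eq n hn, map_sum]
  refine Finset.sum_congr rfl fun i _ => ?_
  rw [hsm, mu]
end

section
/- Let p be an odd prime, r ≥ 1 an integer, m ∈ ℤ and 0 ≤ n < p^r. Then for every integer x: binom(x − m, n) ≡ Σ_{i=0}^{p^r−1} binom(i − m, n) · binom(x − i − 1, p^r − 1) (mod p). (Via the separating characters χ_x of Dist(T_r), this expresses the change-of-basis formula binom(H−m, n) = Σ_{i=0}^{p^r−1} binom(i−m, n) · μ_i^{(r)} in Dist(T_r), where μ_i^{(r)} = binom(H−i−1, p^r−1).) -/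
/-- The generalized (falling-factorial) binomial coefficient
`binom(y, k) = y(y−1)⋯(y−k+1)/k! ∈ ℤ` for `y ∈ ℤ`, `k ∈ ℕ`
(the division is exact, so integer division gives the correct value). -/
def ibinom (y : ℤ) (k : ℕ) : ℤ :=
  (∏ j ∈ Finset.range k, (y - (j : ℤ))) / (k.factorial : ℤ)

lemma prod_range_eq_descPochhammer (y : ℤ) (k : ℕ) :
    (∏ j ∈ Finset.range k, (y - (j : ℤ))) = (descPochhammer ℤ k).eval y := by
  induction k with
  | zero => simp
  | succ k ih => rw [Finset.prod_range_succ, ih, descPochhammer_succ_eval]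

lemma ibinom_eq_choose (y : ℤ) (k : ℕ) : ibinom y k = Ring.choose y k := by
  rw [ibinom, prod_range_eq_descPochhammer, Polynomial.eval_eq_smeval,
    Ring.descPochhammer_eq_factorial_smul_choose, nsmul_eq_mul]
  exact Int.mul_ediv_cancel_left _ (by exact_mod_cast k.factorial_ne_zero)

lemma ibinom_natCast (t k : ℕ) : ibinom (t : ℤ) k = (t.choose k : ℤ) := by
  rw [ibinom_eq_choose, Ring.choose_natCast]

/-- Periodicity mod `p` of `ibinom · k` with period `p^r`, for `k < p^r`. -/
lemma ibinom_period (p : ℕ) (hp : p.Prime) (r : ℕ) (k : ℕ) (hk : k < p ^ r) (y : ℤ) :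
    ((ibinom (y + (p : ℤ) ^ r) k : ZMod p)) = (ibinom y k : ZMod p) := by
  have hv := Ring.add_choose_eq (r := y) (s := ((p : ℤ) ^ r)) k (Commute.all _ _)
  rw [ibinom_eq_choose, ibinom_eq_choose, hv]
  push_cast
  rw [Finset.sum_eq_single (k, 0)]
  · have : ((p : ℤ) ^ r) = ((p ^ r : ℕ) : ℤ) := by push_cast; ring
    rw [this, Ring.choose_natCast]
    simp
  · rintro ⟨i, j⟩ hij hne
    have hij' : i + j = k := Finset.HasAntidiagonal.mem_antidiagonal.mp hij
    have hj : j ≠ 0 := by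
      rintro rfl
      exact hne (by simp [← hij'])
    have hjp : j ≠ p ^ r := by
      have : j ≤ k := le_of_add_le_right hij'.le
      omega
    have hdvd : p ∣ (p ^ r).choose j := Nat.Prime.dvd_choose_pow hp hj hjp
    have : ((p : ℤ) ^ r) = ((p ^ r : ℕ) : ℤ) := by push_cast; ring
    rw [this, Ring.choose_natCast]
    have : (((p ^ r).choose j : ℤ) : ZMod p) = 0 := by
      rw [Int.cast_natCast, ZMod.natCast_eq_zero_iff]
      exact hdvd
    rw [this, mul_zero]
  · intro h
    exact absurd (Finset.HasAntidiagonal.mem_antidiagonal.mpr (by simp)) h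

lemma ibinom_period_mul (p : ℕ) (hp : p.Prime) (r : ℕ) (k : ℕ) (hk : k < p ^ r) (y q : ℤ) :
    ((ibinom (y + (p : ℤ) ^ r * q) k : ZMod p)) = (ibinom y k : ZMod p) := by
  induction q using Int.induction_on with
  | zero => simp
  | succ q ih =>
      have := ibinom_period p hp r k hk (y + (p : ℤ) ^ r * q)
      rw [← ih, ← this]; ring_nf
  | pred q ih =>
      have := ibinom_period p hp r k hk (y + (p : ℤ) ^ r * (-q - 1))
      rw [← ih, ← this]; ring_nf

/-- Reduce the argument of `ibinom · k` modulo `p^r`. -/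
lemma ibinom_emod (p : ℕ) (hp : p.Prime) (r : ℕ) (k : ℕ) (hk : k < p ^ r) (y : ℤ) :
    ((ibinom y k : ZMod p)) = (ibinom (y % ((p : ℤ) ^ r)) k : ZMod p) := by
  have h : y = y % ((p : ℤ) ^ r) + ((p : ℤ) ^ r) * (y / ((p : ℤ) ^ r)) := by
    rw [Int.emod_add_mul_ediv]
  calc ((ibinom y k : ZMod p))
      = (ibinom (y % ((p : ℤ) ^ r) + ((p : ℤ) ^ r) * (y / ((p : ℤ) ^ r))) k : ZMod p) := by
        rw [← h]
    _ = (ibinom (y % ((p : ℤ) ^ r)) k : ZMod p) := ibinom_period_mul p hp r k hk _ _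

lemma ibinom_toNat (t : ℤ) (ht : 0 ≤ t) (k : ℕ) :
    ibinom t k = (t.toNat.choose k : ℤ) := by
  rw [← ibinom_natCast, Int.toNat_of_nonneg ht]

theorem stmt16 (p : ℕ) (hp : p.Prime) (hodd : Odd p) (r : ℕ) (hr : 1 ≤ r)
    (m : ℤ) (n : ℕ) (hn : n < p ^ r) (x : ℤ) :
    ((ibinom (x - m) n : ZMod p)) =
      ∑ i ∈ Finset.range (p ^ r),
        ((ibinom ((i : ℤ) - m) n : ZMod p)) * ((ibinom (x - i - 1) (p ^ r - 1) : ZMod p)) := by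
  have hppos := hp.pos
  have hp0 : (0 : ℤ) < (p : ℤ) ^ r := by positivity
  have hNnat : ((p ^ r : ℕ) : ℤ) = (p : ℤ) ^ r := by push_cast; ring
  have hN1 : 1 ≤ p ^ r := Nat.one_le_pow _ _ hp.pos
  set N : ℤ := (p : ℤ) ^ r with hN
  set i₀ : ℕ := (x % N).toNat with hi₀
  have hx0 : 0 ≤ x % N := Int.emod_nonneg x (ne_of_gt hp0)
  have hxN : x % N < N := Int.emod_lt_of_pos x hp0
  have hi₀N : (i₀ : ℤ) = x % N := Int.toNat_of_nonneg hx0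
  have hi₀lt : i₀ < p ^ r := by
    have : (i₀ : ℤ) < ((p ^ r : ℕ) : ℤ) := by rw [hi₀N, hNnat]; exact hxN
    exact_mod_cast this
  have hk1 : p ^ r - 1 < p ^ r := by omega
  have hNk : ((p ^ r - 1 : ℕ) : ℤ) = N - 1 := by
    rw [Nat.cast_sub hN1, ← hNnat]; norm_num
  -- key: the residue of x - i - 1 is N - 1 iff i = i₀
  have hkey : ∀ i : ℕ, i < p ^ r → ((x - i - 1) % N = N - 1 ↔ i = i₀) := by
    intro i hi
    have hiN : (i : ℤ) < N := by
      have h' : (i : ℤ) < ((p ^ r : ℕ) : ℤ) := by exact_mod_cast hi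
      rwa [hNnat] at h'
    constructor
    · intro h
      have h1 : x - i - 1 ≡ N - 1 [ZMOD N] := by
        unfold Int.ModEq
        rw [h, Int.emod_eq_of_lt (by omega) (by omega)]
      have h2 : (N : ℤ) - 1 ≡ -1 [ZMOD N] := by
        have : (N : ℤ) - 1 = -1 + N * 1 := by ring
        rw [this]; exact (Int.add_mul_emod_self_left (a := -1) (b := N) (c := 1))
      have h3 : x ≡ (i : ℤ) [ZMOD N] := by
        have := (h1.trans h2).add_right ((i : ℤ) + 1)
        simpa using this
      have : x % N = (i : ℤ) % N := h3
      have : x % N = (i : ℤ) := by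
        rw [this, Int.emod_eq_of_lt (by positivity) hiN]
      omega
    · rintro rfl
      have hq : x - (i₀ : ℤ) = N * (x / N) := by
        rw [hi₀N]; rw [Int.emod_def]; ring
      have : x - (i₀ : ℤ) - 1 = (N - 1) + N * (x / N - 1) := by
        rw [mul_sub, ← hq]; ring
      rw [this, Int.add_mul_emod_self_left, Int.emod_eq_of_lt (by omega) (by omega)]
  -- compute each term's second factor
  have hdelta : ∀ i : ℕ, i < p ^ r →
      ((ibinom (x - i - 1) (p ^ r - 1) : ZMod p)) = if i = i₀ then 1 else 0 := by
    intro i hi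
    rw [ibinom_emod p hp r _ hk1, ← hN]
    have ht0 : 0 ≤ (x - i - 1) % N := Int.emod_nonneg _ (ne_of_gt hp0)
    have htN : (x - i - 1) % N < N := Int.emod_lt_of_pos _ hp0
    rw [ibinom_toNat _ ht0]
    by_cases hcase : i = i₀
    · rw [if_pos hcase, (hkey i hi).mpr hcase]
      have : (N - 1).toNat = p ^ r - 1 := by
        rw [← hNk]; simp
      rw [this, Nat.choose_self]
      simp
    · rw [if_neg hcase]
      have hne : (x - i - 1) % N ≠ N - 1 := fun h => hcase ((hkey i hi).mp h)
      have hlt : ((x - i - 1) % N).toNat < p ^ r - 1 := by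
        have hlt' : (x - i - 1) % N < N - 1 := lt_of_le_of_ne (by omega) hne
        have : ((x - i - 1) % N) < ((p ^ r - 1 : ℕ) : ℤ) := by rw [hNk]; exact hlt'
        omega
      rw [Nat.choose_eq_zero_of_lt hlt]
      simp
  rw [Finset.sum_congr rfl (fun i hi => by
    rw [hdelta i (Finset.mem_range.mp hi)])]
  rw [Finset.sum_eq_single i₀]
  · rw [if_pos rfl, mul_one]
    -- ibinom (x - m) n ≡ ibinom (i₀ - m) n
    have hq : x - m = ((i₀ : ℤ) - m) + N * (x / N) := by
      rw [hi₀N, Int.emod_def]; ring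
    rw [hq, ibinom_period_mul p hp r n hn]
  · intro i hi hne
    rw [if_neg hne, mul_zero]
  · intro h
    exact absurd (Finset.mem_range.mpr hi₀lt) h
end

section
/- Let p be an odd prime, r ≥ 1 an integer, 0 ≤ m < p and n ∈ ℤ. Then for every integer x: binom(x − m − np − 1, p^{r+1} − 1) ≡ binom(x − m − 1, p − 1) · binom(⌊x/p⌋ − n − 1, p^r − 1) (mod p), where ⌊x/p⌋ denotes the floor of x/p (integer division rounding toward −∞). (Via the separating characters χ_x of Dist(T_{r+1}), this expresses the factorization μ_{m+np}^{(r+1)} = μ_m · Fr′(μ_n^{(r)}), where Fr′ is the splitting of the Frobenius on the distribution algebra of the torus determined by binom(H, k) ↦ binom(H, pk), and hence that φ(μ_n^{(r)}) = μ_{np}^{(r+1)}.) -/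
lemma descPochhammer_eval_eq_prod (y : ℤ) (k : ℕ) :
    (descPochhammer ℤ k).eval y = ∏ j ∈ Finset.range k, (y - (j : ℤ)) := by
  induction k with
  | zero => simp
  | succ k ih =>
    rw [descPochhammer_succ_right, Finset.prod_range_succ, ← ih]
    simp

lemma prod_range_int_natCast (N k : ℕ) :
    ∏ j ∈ Finset.range k, ((N : ℤ) - j) = (N.choose k : ℤ) * (k.factorial : ℤ) := by
  rw [← descPochhammer_eval_eq_prod, descPochhammer_eval_eq_descFactorial,
    Nat.descFactorial_eq_factorial_mul_choose]
  push_cast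
  ring

lemma ibinom_natCast_s17 (N k : ℕ) : ibinom (N : ℤ) k = N.choose k := by
  unfold ibinom
  rw [prod_range_int_natCast]
  exact Int.mul_ediv_cancel _ (by exact_mod_cast k.factorial_ne_zero)

lemma ibinom_reflect {k : ℕ} (hk : Even k) (z : ℤ) :
    ibinom z k = ibinom ((k : ℤ) - 1 - z) k := by
  unfold ibinom
  congr 1
  rw [← Finset.prod_range_reflect (fun j => z - (j : ℤ)) k]
  have : ∀ j ∈ Finset.range k,
      z - ((k - 1 - j : ℕ) : ℤ) = (-1) * (((k : ℤ) - 1 - z) - j) := by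
    intro j hj
    rw [Finset.mem_range] at hj
    have h1 : ((k - 1 - j : ℕ) : ℤ) = (k : ℤ) - 1 - j := by omega
    rw [h1]; ring
  rw [Finset.prod_congr rfl this, Finset.prod_mul_distrib, Finset.prod_const,
    Finset.card_range, hk.neg_one_pow, one_mul]

lemma chooseInd (p : ℕ) [Fact p.Prime] (s N : ℕ) :
    ((N.choose (p ^ s - 1) : ℕ) : ZMod p) = if p ^ s ∣ N + 1 then 1 else 0 := by
  induction s generalizing N with
  | zero => simp
  | succ s ih =>
    have hp2 := (Fact.out : p.Prime).two_le
    have hps : 1 ≤ p ^ s := Nat.one_le_pow _ _ (by omega)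
    have hA : p * (p ^ s - 1) = p * p ^ s - p := by
      rw [Nat.mul_sub, Nat.mul_one]
    have hB : p ^ (s + 1) = p * p ^ s := by ring
    have hC : p ≤ p * p ^ s := Nat.le_mul_of_pos_right p hps
    have hdec : p ^ (s + 1) - 1 = p * (p ^ s - 1) + (p - 1) := by omega
    have hmod : (p ^ (s + 1) - 1) % p = p - 1 := by
      rw [hdec, Nat.mul_add_mod]
      exact Nat.mod_eq_of_lt (by omega)
    have hdiv : (p ^ (s + 1) - 1) / p = p ^ s - 1 := by
      rw [hdec, Nat.mul_add_div (by omega), Nat.div_eq_of_lt (by omega)]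
      omega
    have hLuc := (Choose.choose_modEq_choose_mod_mul_choose_div_nat
      (p := p) (n := N) (k := p ^ (s + 1) - 1))
    have h1 : ((N.choose (p ^ (s + 1) - 1) : ℕ) : ZMod p)
        = (((N % p).choose (p - 1) : ℕ) : ZMod p) * (((N / p).choose (p ^ s - 1) : ℕ) : ZMod p) := by
      rw [← Nat.cast_mul, (ZMod.natCast_eq_natCast_iff _ _ _)]
      rw [hmod, hdiv] at hLuc
      exact hLuc
    have hmlt : N % p < p := Nat.mod_lt _ (by omega)
    have key : p ∣ N + 1 ↔ N % p = p - 1 := by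
      rw [Nat.dvd_iff_mod_eq_zero, Nat.add_mod, Nat.one_mod_eq_one.mpr (by omega)]
      constructor
      · intro h0
        by_contra hne
        rw [Nat.mod_eq_of_lt (by omega)] at h0
        omega
      · intro h0
        rw [h0, show p - 1 + 1 = p from by omega, Nat.mod_self]
    rw [h1]
    by_cases h2 : N % p = p - 1
    · have e1 : (N % p).choose (p - 1) = 1 := by rw [h2]; exact Nat.choose_self _
      have hmd := Nat.mod_add_div N p
      have hmu : p * (N / p + 1) = p * (N / p) + p := Nat.mul_succ p (N / p)
      have hN : N + 1 = p * (N / p + 1) := by omega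
      have e2 : (p ^ (s + 1) ∣ N + 1) ↔ (p ^ s ∣ N / p + 1) := by
        rw [hN, pow_succ']
        exact Nat.mul_dvd_mul_iff_left (by omega)
      rw [e1, Nat.cast_one, one_mul, ih, if_congr e2.symm rfl rfl]
    · have e1 : (N % p).choose (p - 1) = 0 :=
        Nat.choose_eq_zero_of_lt (by omega)
      have e3 : ¬ p ^ (s + 1) ∣ N + 1 := by
        intro h
        exact h2 (key.mp ((dvd_pow_self p (Nat.succ_ne_zero s)).trans h))
      rw [e1, Nat.cast_zero, zero_mul, if_neg e3]

lemma ibinom_ind (p : ℕ) [Fact p.Prime] (hodd : Odd p) (s : ℕ) (z : ℤ) :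
    ((ibinom z (p ^ s - 1) : ℤ) : ZMod p) = if ((p : ℤ)) ^ s ∣ z + 1 then 1 else 0 := by
  have hp2 := (Fact.out : p.Prime).two_le
  have hps : 1 ≤ p ^ s := Nat.one_le_pow _ _ (by omega)
  have hkeven : Even (p ^ s - 1) := by
    obtain ⟨t, ht⟩ := hodd.pow (n := s)
    exact ⟨t, by omega⟩
  have hcast : ((p ^ s : ℕ) : ℤ) = (p : ℤ) ^ s := by push_cast; ring
  rcases le_or_gt 0 z with hz | hz
  · obtain ⟨N, rfl⟩ := Int.eq_ofNat_of_zero_le hz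
    rw [ibinom_natCast_s17, Int.cast_natCast, chooseInd]
    have e : (p ^ s ∣ N + 1) ↔ ((p : ℤ) ^ s ∣ (N : ℤ) + 1) := by
      rw [← hcast, show ((N : ℤ) + 1) = ((N + 1 : ℕ) : ℤ) from by push_cast; ring,
        Int.natCast_dvd_natCast]
    rw [if_congr e rfl rfl]
  · rw [ibinom_reflect hkeven]
    have hkz : ((p ^ s - 1 : ℕ) : ℤ) = (p : ℤ) ^ s - 1 := by
      rw [Nat.cast_sub hps, hcast, Nat.cast_one]
    have hnn : 0 ≤ ((p ^ s - 1 : ℕ) : ℤ) - 1 - z := by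
      rw [hkz]
      have : (0 : ℤ) ≤ (p : ℤ) ^ s - 1 := by
        rw [← hkz]; exact Int.natCast_nonneg _
      omega
    obtain ⟨N, hN⟩ := Int.eq_ofNat_of_zero_le hnn
    rw [hN, ibinom_natCast_s17, Int.cast_natCast, chooseInd]
    have h5 : ((N : ℤ) + 1) = (p : ℤ) ^ s - (z + 1) := by
      rw [← hN, hkz]; ring
    have e : (p ^ s ∣ N + 1) ↔ ((p : ℤ) ^ s ∣ z + 1) := by
      rw [show (p ^ s ∣ N + 1) ↔ ((p : ℤ) ^ s ∣ (N : ℤ) + 1) from by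
        rw [← hcast, show ((N : ℤ) + 1) = ((N + 1 : ℕ) : ℤ) from by push_cast; ring,
          Int.natCast_dvd_natCast], h5]
      exact dvd_sub_right (dvd_refl _)
    rw [if_congr e rfl rfl]

theorem stmt17 (p : ℕ) (hp : p.Prime) (hodd : Odd p) (r : ℕ) (hr : 1 ≤ r)
    (m : ℕ) (hm : m < p) (n x : ℤ) :
    ((ibinom (x - m - n * p - 1) (p ^ (r + 1) - 1) : ZMod p)) =
      ((ibinom (x - m - 1) (p - 1) : ZMod p)) *
        ((ibinom (Int.fdiv x p - n - 1) (p ^ r - 1) : ZMod p)) := by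
  haveI : Fact p.Prime := ⟨hp⟩
  have hp2 := hp.two_le
  have hp0 : (0 : ℤ) < (p : ℤ) := by exact_mod_cast (by omega : 0 < p)
  rw [show p - 1 = p ^ 1 - 1 from by rw [pow_one]]
  rw [ibinom_ind p hodd (r + 1), ibinom_ind p hodd 1, ibinom_ind p hodd r]
  have e1 : x - (m : ℤ) - n * p - 1 + 1 = x - m - n * p := by ring
  have e2 : x - (m : ℤ) - 1 + 1 = x - m := by ring
  have e3 : Int.fdiv x p - n - 1 + 1 = Int.fdiv x p - n := by ring
  rw [e1, e2, e3, pow_one]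
  by_cases h1 : (p : ℤ) ∣ x - m
  · have hmx : x % (p : ℤ) = (m : ℤ) := by
      have hmod : x % (p : ℤ) = (m : ℤ) % (p : ℤ) := Int.ModEq.symm (Int.modEq_iff_dvd.mpr (by
        simpa using h1))
      rw [hmod]
      exact Int.emod_eq_of_lt (by exact_mod_cast Nat.zero_le m) (by exact_mod_cast hm)
    have hfd : x = (p : ℤ) * (Int.fdiv x p) + m := by
      rw [Int.fdiv_eq_ediv_of_nonneg _ (le_of_lt hp0), ← hmx]
      exact (Int.mul_ediv_add_emod x p).symm
    have e4 : x - (m : ℤ) - n * p = (p : ℤ) * (Int.fdiv x p - n) := by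
      linear_combination hfd
    have e5 : ((p : ℤ) ^ (r + 1) ∣ x - m - n * p) ↔ ((p : ℤ) ^ r ∣ Int.fdiv x p - n) := by
      rw [e4, pow_succ']
      exact mul_dvd_mul_iff_left (by exact_mod_cast hp.ne_zero)
    rw [if_pos h1, if_congr e5 rfl rfl, one_mul]
  · have e6 : ¬ ((p : ℤ) ^ (r + 1) ∣ x - m - n * p) := by
      intro h
      apply h1
      have hpd : (p : ℤ) ∣ x - m - n * p :=
        (dvd_pow_self (p : ℤ) (Nat.succ_ne_zero r)).trans h
      have := dvd_add hpd (dvd_mul_left (p : ℤ) n)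
      simpa using this
    rw [if_neg e6, if_neg h1, zero_mul]
end
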